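/- arXiv:2106.00740 — 3 statements merged into one kernel-verified Lean document; each statement's English description precedes it below -/
import Mathlib

section
/- There exists a probability space carrying random variables (S, X, U) such that (S, X) has the given joint distribution, U takes values in the nonempty subsets of [K], X ∈ U almost surely, U is independent of S, and P(|U| ≤ i) ≥ Σ_{j=1}^{i} θ_j for every i ∈ [K]. -/
open MeasureTheory ProbabilityTheory

/-- The (discrete) measurable-space structure on finite sets of `Fin K`. -/
instance finsetFinMeasurableSpace (K : ℕ) : MeasurableSpace (Finset (Fin K)) := ⊤


open MeasureTheory ProbabilityTheory Set

namespace ObfAux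

attribute [local instance] Classical.propDecidable

/-! ### Generic index-picking from a monotone cumulative sequence -/

noncomputable def pickL (c : ℕ → ℝ) (N : ℕ) (v : ℝ) : ℕ :=
  Nat.findGreatest (fun n => c n ≤ v) N

noncomputable def pickR (c : ℕ → ℝ) (N : ℕ) (v : ℝ) : ℕ :=
  Nat.findGreatest (fun n => c n < v) N

lemma pickL_le (c : ℕ → ℝ) (N : ℕ) (v : ℝ) : pickL c N v ≤ N :=
  Nat.findGreatest_le N

lemma pickR_le (c : ℕ → ℝ) (N : ℕ) (v : ℝ) : pickR c N v ≤ N :=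
  Nat.findGreatest_le N

lemma pickL_mono (c : ℕ → ℝ) (N : ℕ) : Monotone (pickL c N) := by
  intro v v' h
  exact Nat.findGreatest_mono (fun n hn => le_trans hn h) le_rfl

lemma pickR_mono (c : ℕ → ℝ) (N : ℕ) : Monotone (pickR c N) := by
  intro v v' h
  exact Nat.findGreatest_mono (fun n hn => lt_of_lt_of_le hn h) le_rfl

lemma pickL_eq {c : ℕ → ℝ} (hc : Monotone c) {N n : ℕ} {v : ℝ} (hn : n ≤ N)
    (h1 : c n ≤ v) (h2 : v < c (n + 1)) : pickL c N v = n := by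
  refine le_antisymm ?_ (Nat.le_findGreatest hn h1)
  by_contra h
  push_neg at h
  have hP : c (pickL c N v) ≤ v := by
    unfold pickL; exact Nat.findGreatest_spec (P := fun n => c n ≤ v) hn h1
  have : c (n + 1) ≤ c (pickL c N v) := hc h
  linarith

lemma pickL_spec {c : ℕ → ℝ} (hc : Monotone c) {N : ℕ} {v : ℝ}
    (h0 : c 0 ≤ v) (hN : v < c N) :
    c (pickL c N v) ≤ v ∧ v < c (pickL c N v + 1) ∧ pickL c N v < N := by
  have hP : c (pickL c N v) ≤ v := by
    unfold pickL; exact Nat.findGreatest_spec (P := fun n => c n ≤ v) (Nat.zero_le N) h0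
  have hlt : pickL c N v < N := by
    rcases lt_or_eq_of_le (pickL_le c N v) with h | h
    · exact h
    · exact absurd (h ▸ hP) (not_le.2 hN)
  refine ⟨hP, ?_, hlt⟩
  by_contra hcon
  push_neg at hcon
  have h2 : pickL c N v + 1 ≤ pickL c N v := by
    have hlt' : Nat.findGreatest (fun n => c n ≤ v) N < N := hlt
    unfold pickL
    exact Nat.le_findGreatest (by omega) hcon
  omega

lemma pickR_eq {c : ℕ → ℝ} (hc : Monotone c) {N n : ℕ} {v : ℝ} (hn : n ≤ N)
    (h1 : c n < v) (h2 : v ≤ c (n + 1)) : pickR c N v = n := by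
  refine le_antisymm ?_ (Nat.le_findGreatest hn h1)
  by_contra h
  push_neg at h
  have hP : c (pickR c N v) < v := by
    unfold pickR; exact Nat.findGreatest_spec (P := fun n => c n < v) hn h1
  have : c (n + 1) ≤ c (pickR c N v) := hc h
  linarith

end ObfAux

section S2
namespace ObfAux
attribute [local instance] Classical.propDecidable
open Set Finset

lemma pickR_lt_self {c : ℕ → ℝ} {N : ℕ} {v : ℝ} (h : pickR c N v ≠ 0) :
    c (pickR c N v) < v := by
  unfold pickR
  exact Nat.findGreatest_of_ne_zero rfl (by unfold pickR at h; exact h)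

lemma pickR_not_lt {c : ℕ → ℝ} {N k : ℕ} {v : ℝ} (h1 : pickR c N v < k) (h2 : k ≤ N) :
    ¬ c k < v := by
  unfold pickR at h1
  exact Nat.findGreatest_is_greatest h1 h2

variable {K : ℕ}

/-- `m % (K+1)` as an element of `Fin (K+1)`. -/
def mkF (K m : ℕ) : Fin (K + 1) := ⟨m % (K + 1), Nat.mod_lt _ K.succ_pos⟩

/-- clamp a natural number into `Fin (K+1)`. -/
def clampF (K j : ℕ) : Fin (K + 1) := ⟨min j K, by omega⟩

lemma mkF_val (i : Fin (K + 1)) : mkF K i.val = i := by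
  apply Fin.ext
  simp [mkF, Nat.mod_eq_of_lt i.isLt]

lemma mkF_small {m : ℕ} (h : m < K + 1) : (mkF K m : Fin (K+1)) = ⟨m, h⟩ := by
  apply Fin.ext
  simp [mkF, Nat.mod_eq_of_lt h]

variable (P : Fin (K + 1) → Fin (K + 1) → ℝ) (e : Fin (K + 1) → Fin (K + 1) → Fin (K + 1))

/-- cumulative sorted values: `svc P e i j` is the `j`-th smallest of `P i ·` (cumulatively,
`svc i 0 = 0`, and constant `= max` for `j ≥ K+1`). -/
noncomputable def svc (i : Fin (K + 1)) (j : ℕ) : ℝ :=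
  if j = 0 then 0 else P i (e i (clampF K (j - 1)))

noncomputable def cellLen (m : ℕ) : ℝ :=
  svc P e (mkF K m) (m / (K + 1) + 1) - svc P e (mkF K m) (m / (K + 1))

noncomputable def cpos (m : ℕ) : ℝ := ∑ t ∈ Finset.range m, cellLen P e t

/-- 0-based rank of `s` in the ordering `e i` of the row `i`. -/
noncomputable def rnk (i s : Fin (K + 1)) : ℕ := (Function.invFun (e i) s : Fin (K + 1)).val

/-- cell `m` is active for the private value `s`. -/
def act (s : Fin (K + 1)) (m : ℕ) : Prop := m / (K + 1) ≤ rnk e (mkF K m) s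

/-- the active cells of `s` in row ... for non-private value `i`. -/
noncomputable def Tc (s i : Fin (K + 1)) : Finset ℕ :=
  (Finset.range ((K + 1) * (K + 1))).filter (fun m => mkF K m = i ∧ act e s m)

noncomputable def aval (s i : Fin (K + 1)) : ℝ :=
  ∑ m ∈ Tc e s i, (min 1 (cpos P e (m + 1)) - min 1 (cpos P e m))

noncomputable def del (s i : Fin (K + 1)) : ℝ := P i s - aval P e s i

noncomputable def Del (s : Fin (K + 1)) : ℝ := ∑ i, del P e s i

noncomputable def G (s : Fin (K + 1)) (k : ℕ) : ℝ :=
  (∑ i ∈ Finset.univ.filter (fun i : Fin (K + 1) => i.val < k), del P e s i) / Del P e s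

section Hyp

variable (hP0 : ∀ i s, 0 ≤ P i s)
  (hmono : ∀ i, Monotone fun j => P i (e i j))
  (hbij : ∀ i, Function.Bijective (e i))

include hP0 hmono in
lemma svc_mono (i : Fin (K + 1)) : Monotone (svc P e i) := by
  have step : ∀ j, svc P e i j ≤ svc P e i (j + 1) := by
    intro j
    cases j with
    | zero => simpa [svc] using hP0 i _
    | succ j =>
      show svc P e i (j+1) ≤ svc P e i (j+2)
      simp only [svc, if_neg (Nat.succ_ne_zero _), Nat.succ_sub_one]
      exact hmono i (by simp only [clampF, Fin.mk_le_mk]; omega)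
  exact monotone_nat_of_le_succ step

include hP0 hmono in
lemma cellLen_nonneg (m : ℕ) : 0 ≤ cellLen P e m :=
  sub_nonneg.2 (svc_mono P e hP0 hmono _ (Nat.le_succ _))

include hP0 hmono in
lemma cpos_mono : Monotone (cpos P e) := by
  intro a b hab
  exact Finset.sum_le_sum_of_subset_of_nonneg (Finset.range_subset_range.2 hab)
    (fun t _ _ => cellLen_nonneg P e hP0 hmono t)

lemma cpos_zero : cpos P e 0 = 0 := by simp [cpos]

lemma cpos_succ (m : ℕ) : cpos P e (m + 1) = cpos P e m + cellLen P e m := by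
  simp [cpos, Finset.sum_range_succ]

include hP0 hmono in
lemma cpos_nonneg (m : ℕ) : 0 ≤ cpos P e m := by
  simpa [cpos_zero] using cpos_mono P e hP0 hmono (Nat.zero_le m)

lemma cellLen_eval (r t : ℕ) (ht : t < K + 1) :
    cellLen P e ((K + 1) * r + t) = svc P e ⟨t, ht⟩ (r + 1) - svc P e ⟨t, ht⟩ r := by
  have h1 : ((K + 1) * r + t) / (K + 1) = r := by
    rw [Nat.mul_add_div K.succ_pos, Nat.div_eq_of_lt ht]; omega
  have h2 : mkF K ((K + 1) * r + t) = ⟨t, ht⟩ := by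
    apply Fin.ext
    simp [mkF, Nat.mul_add_mod, Nat.mod_eq_of_lt ht]
  rw [cellLen, h1, h2]

/-- row starts: `cpos ((K+1)*r) = ∑ i, svc i r`. -/
lemma cpos_row (r : ℕ) : cpos P e ((K + 1) * r) = ∑ i, svc P e i r := by
  induction r with
  | zero => simp [cpos_zero, svc]
  | succ r ih =>
    have hsplit : cpos P e ((K + 1) * (r + 1)) =
        cpos P e ((K + 1) * r) + ∑ t ∈ Finset.range (K + 1), cellLen P e ((K + 1) * r + t) := by
      have : (K + 1) * (r + 1) = (K + 1) * r + (K + 1) := by ring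
      rw [this]
      generalize (K + 1) * r = a
      induction (K + 1) with
      | zero => simp
      | succ b ihb => rw [← Nat.add_assoc, cpos_succ,
          Finset.sum_range_succ, ihb]; ring
    rw [hsplit, ih]
    have : ∑ t ∈ Finset.range (K + 1), cellLen P e ((K + 1) * r + t)
        = ∑ i : Fin (K + 1), (svc P e i (r + 1) - svc P e i r) := by
      rw [← Fin.sum_univ_eq_sum_range (fun t => cellLen P e ((K + 1) * r + t)) (K + 1)]
      apply Finset.sum_congr rfl
      intro i _
      rw [cellLen_eval P e r i.val i.isLt]
    rw [this, Finset.sum_sub_distrib]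
    ring

lemma rnk_lt (i s : Fin (K + 1)) : rnk e i s < K + 1 := (Function.invFun (e i) s).isLt

include hbij in
lemma e_rnk (i s : Fin (K + 1)) : e i (clampF K (rnk e i s)) = s := by
  have h1 : clampF K (rnk e i s) = Function.invFun (e i) s := by
    apply Fin.ext
    have := (Function.invFun (e i) s).isLt
    simp [clampF, rnk]; omega
  rw [h1]
  exact Function.invFun_eq ((hbij i).2 s)

include hbij in
lemma svc_rnk (i s : Fin (K + 1)) : svc P e i (rnk e i s + 1) = P i s := by
  simp [svc, e_rnk e hbij i s]

end Hyp

end ObfAux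
end S2

section S3
namespace ObfAux
attribute [local instance] Classical.propDecidable
open Set Finset

variable {K : ℕ}
variable (P : Fin (K + 1) → Fin (K + 1) → ℝ) (e : Fin (K + 1) → Fin (K + 1) → Fin (K + 1))

lemma Tc_eq (s i : Fin (K + 1)) :
    Tc e s i = (Finset.range (rnk e i s + 1)).image (fun r => (K + 1) * r + i.val) := by
  ext m
  simp only [Tc, Finset.mem_filter, Finset.mem_range, Finset.mem_image]
  constructor
  · rintro ⟨hm, hmk, hact⟩
    refine ⟨m / (K + 1), ?_, ?_⟩
    · have : rnk e (mkF K m) s = rnk e i s := by rw [hmk]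
      unfold act at hact
      omega
    · have h1 : m % (K + 1) = i.val := by rw [← hmk]; rfl
      have := Nat.div_add_mod m (K + 1)
      omega
  · rintro ⟨r, hr, rfl⟩
    have hdiv : ((K + 1) * r + i.val) / (K + 1) = r := by
      rw [Nat.mul_add_div K.succ_pos, Nat.div_eq_of_lt i.isLt]; omega
    have hmk : mkF K ((K + 1) * r + i.val) = i := by
      apply Fin.ext
      simp [mkF, Nat.mul_add_mod, Nat.mod_eq_of_lt i.isLt]
    have hrnk := rnk_lt e i s
    refine ⟨?_, hmk, ?_⟩
    · have : r ≤ K := by omega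
      have hi := i.isLt
      calc (K + 1) * r + i.val < (K + 1) * r + (K + 1) := by omega
        _ ≤ (K + 1) * K + (K + 1) := by
            have : (K+1) * r ≤ (K+1) * K := Nat.mul_le_mul_left _ this
            omega
        _ = (K + 1) * (K + 1) := by ring
    · unfold act
      rw [hdiv, hmk]
      omega

lemma sum_Tc (s i : Fin (K + 1)) (f : ℕ → ℝ) :
    ∑ m ∈ Tc e s i, f m = ∑ r ∈ Finset.range (rnk e i s + 1), f ((K + 1) * r + i.val) := by
  rw [Tc_eq, Finset.sum_image]
  intro a _ b _ h
  have : (K + 1) * a = (K + 1) * b := by simp only at h; omega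
  exact Nat.eq_of_mul_eq_mul_left K.succ_pos this

variable (hP0 : ∀ i s, 0 ≤ P i s)
  (hmono : ∀ i, Monotone fun j => P i (e i j))
  (hbij : ∀ i, Function.Bijective (e i))

include hbij in
lemma sum_cellLen_Tc (s i : Fin (K + 1)) :
    ∑ m ∈ Tc e s i, cellLen P e m = P i s := by
  rw [sum_Tc]
  have : ∀ r ∈ Finset.range (rnk e i s + 1),
      cellLen P e ((K + 1) * r + i.val) = svc P e i (r + 1) - svc P e i r := by
    intro r _
    rw [cellLen_eval P e r i.val i.isLt]
  rw [Finset.sum_congr rfl this, Finset.sum_range_sub (fun r => svc P e i r)]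
  rw [svc_rnk P e hbij]
  simp [svc]

include hP0 hmono in
lemma aval_nonneg (s i : Fin (K + 1)) : 0 ≤ aval P e s i := by
  apply Finset.sum_nonneg
  intro m _
  have := cpos_mono P e hP0 hmono (Nat.le_succ m)
  simp only [sub_nonneg]
  exact min_le_min le_rfl this

include hP0 hmono hbij in
lemma aval_le (s i : Fin (K + 1)) : aval P e s i ≤ P i s := by
  rw [← sum_cellLen_Tc P e hbij s i]
  apply Finset.sum_le_sum
  intro m _
  have h1 : cpos P e m ≤ cpos P e (m + 1) := cpos_mono P e hP0 hmono (Nat.le_succ m)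
  have : min 1 (cpos P e (m+1)) - min 1 (cpos P e m) ≤ cpos P e (m+1) - cpos P e m := by
    rcases le_total (cpos P e (m+1)) 1 with h | h
    · rw [min_eq_right h, min_eq_right (le_trans h1 h)]
    · rw [min_eq_left h]
      rcases le_total (cpos P e m) 1 with h2 | h2
      · rw [min_eq_right h2]; linarith
      · rw [min_eq_left h2]; linarith
  calc min 1 (cpos P e (m+1)) - min 1 (cpos P e m) ≤ cpos P e (m+1) - cpos P e m := this
    _ = cellLen P e m := by rw [cpos_succ]; ring

include hP0 hmono hbij in
lemma del_nonneg (s i : Fin (K + 1)) : 0 ≤ del P e s i :=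
  sub_nonneg.2 (aval_le P e hP0 hmono hbij s i)

include hP0 hmono hbij in
lemma Del_nonneg (s : Fin (K + 1)) : 0 ≤ Del P e s :=
  Finset.sum_nonneg fun i _ => del_nonneg P e hP0 hmono hbij s i

include hP0 hmono hbij in
lemma G_mono (s : Fin (K + 1)) : Monotone (G P e s) := by
  intro a b hab
  unfold G
  refine div_le_div_of_nonneg_right ?_ (Del_nonneg P e hP0 hmono hbij s)
  apply Finset.sum_le_sum_of_subset_of_nonneg
  · intro i hi
    simp only [Finset.mem_filter, Finset.mem_univ, true_and] at hi ⊢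
    omega
  · intro i _ _
    exact del_nonneg P e hP0 hmono hbij s i

include hP0 hmono hbij in
lemma del_eq_zero_of_Del (s : Fin (K + 1)) (hD : Del P e s = 0) (i : Fin (K + 1)) :
    del P e s i = 0 := by
  have := (Finset.sum_eq_zero_iff_of_nonneg
    (fun i _ => del_nonneg P e hP0 hmono hbij s i)).1 hD
  exact this i (Finset.mem_univ i)

lemma G_zero (s : Fin (K + 1)) : G P e s 0 = 0 := by simp [G]

lemma G_last (s : Fin (K + 1)) (hD : Del P e s ≠ 0) : G P e s (K + 1) = 1 := by
  unfold G
  rw [Finset.filter_true_of_mem (fun i _ => i.isLt)]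
  exact div_self hD

include hP0 hmono hbij in
lemma G_nonneg (s : Fin (K + 1)) (k : ℕ) : 0 ≤ G P e s k := by
  simpa [G_zero] using G_mono P e hP0 hmono hbij s (Nat.zero_le k)

include hP0 hmono hbij in
lemma G_le_one (s : Fin (K + 1)) (k : ℕ) : G P e s k ≤ 1 := by
  rcases eq_or_ne (Del P e s) 0 with hD | hD
  · simp [G, hD]
  · rcases le_or_gt k (K + 1) with h | h
    · calc G P e s k ≤ G P e s (K + 1) := G_mono P e hP0 hmono hbij s h
        _ = 1 := G_last P e s hD
    · have hf : Finset.univ.filter (fun t : Fin (K + 1) => t.val < k)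
          = Finset.univ.filter (fun t : Fin (K + 1) => t.val < K + 1) := by
        ext t
        have := t.isLt
        simp only [Finset.mem_filter, Finset.mem_univ, true_and]
        omega
      have : G P e s k = G P e s (K + 1) := by unfold G; rw [hf]
      rw [this]
      exact le_of_eq (G_last P e s hD)

lemma G_succ_sub (s : Fin (K + 1)) (i : Fin (K + 1)) (hD : Del P e s ≠ 0) :
    G P e s (i.val + 1) - G P e s i.val = del P e s i / Del P e s := by
  unfold G
  rw [div_sub_div_same]
  congr 1
  have hins : Finset.univ.filter (fun t : Fin (K + 1) => t.val < i.val + 1)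
      = insert i (Finset.univ.filter (fun t : Fin (K + 1) => t.val < i.val)) := by
    ext t
    simp only [Finset.mem_filter, Finset.mem_univ, true_and, Finset.mem_insert]
    constructor
    · intro h
      rcases Nat.lt_succ_iff_lt_or_eq.1 h with h | h
      · exact Or.inr h
      · exact Or.inl (Fin.ext h)
    · rintro (rfl | h)
      · omega
      · omega
  rw [hins, Finset.sum_insert (by simp)]
  ring

end ObfAux
end S3

section S4
namespace ObfAux
attribute [local instance] Classical.propDecidable
open Set Finset

variable {K : ℕ}
variable (P : Fin (K + 1) → Fin (K + 1) → ℝ) (e : Fin (K + 1) → Fin (K + 1) → Fin (K + 1))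

/-- the set of time points where `s` is actively scheduled (in place). -/
def AV (s : Fin (K + 1)) : Set ℝ :=
  {v | 0 ≤ v ∧ v < 1 ∧ v < cpos P e ((K + 1) * (K + 1)) ∧
    act e s (pickL (cpos P e) ((K + 1) * (K + 1)) v)}

noncomputable def sched (s : Fin (K + 1)) (w : ℝ × ℝ) : Fin (K + 1) :=
  if w.1 ∈ AV P e s then mkF K (pickL (cpos P e) ((K + 1) * (K + 1)) w.1)
  else mkF K (pickR (G P e s) (K + 1) w.2)

def AVi (s i : Fin (K + 1)) : Set ℝ :=
  AV P e s ∩ {v | mkF K (pickL (cpos P e) ((K + 1) * (K + 1)) v) = i}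

def IFs (s i : Fin (K + 1)) : Set ℝ :=
  {v' | mkF K (pickR (G P e s) (K + 1) v') = i}

noncomputable def Uset (w : ℝ × ℝ) : Finset (Fin (K + 1)) :=
  Finset.univ.image (fun s => sched P e s w)

lemma mem_Uset (s : Fin (K + 1)) (w : ℝ × ℝ) : sched P e s w ∈ Uset P e w :=
  Finset.mem_image_of_mem _ (Finset.mem_univ s)

lemma Uset_nonempty (w : ℝ × ℝ) : (Uset P e w).Nonempty :=
  ⟨_, mem_Uset P e 0 w⟩

lemma fiber_eq (s i : Fin (K + 1)) :
    {w : ℝ × ℝ | sched P e s w = i}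
      = (AVi P e s i ×ˢ (univ : Set ℝ)) ∪ ((AV P e s)ᶜ ×ˢ IFs P e s i) := by
  ext ⟨v, v'⟩
  by_cases h : v ∈ AV P e s
  · simp [sched, h, AVi, IFs, Set.mem_prod]
  · simp [sched, h, AVi, IFs, Set.mem_prod]

variable (hP0 : ∀ i s, 0 ≤ P i s)
  (hmono : ∀ i, Monotone fun j => P i (e i j))
  (hbij : ∀ i, Function.Bijective (e i))

include hP0 hmono in
lemma AVi_eq (s i : Fin (K + 1)) :
    AVi P e s i = ⋃ m ∈ Tc e s i, (Ico (cpos P e m) (cpos P e (m + 1)) ∩ Iio 1) := by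
  have hcm := cpos_mono P e hP0 hmono
  ext v
  simp only [AVi, AV, Set.mem_inter_iff, Set.mem_setOf_eq, Set.mem_iUnion, Set.mem_Ico,
    Set.mem_Iio, Set.mem_inter_iff, exists_prop]
  constructor
  · rintro ⟨⟨h0, h1, hNN, hact⟩, hmk⟩
    obtain ⟨hle, hlt, hltN⟩ := pickL_spec hcm (by simpa [cpos_zero] using h0) hNN
    refine ⟨pickL (cpos P e) ((K + 1) * (K + 1)) v, ?_, ⟨hle, hlt⟩, h1⟩
    simp only [Tc, Finset.mem_filter, Finset.mem_range]
    exact ⟨hltN, hmk, hact⟩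
  · rintro ⟨m, hm, ⟨hle, hlt⟩, h1⟩
    simp only [Tc, Finset.mem_filter, Finset.mem_range] at hm
    obtain ⟨hmN, hmk, hact⟩ := hm
    have hpick : pickL (cpos P e) ((K + 1) * (K + 1)) v = m :=
      pickL_eq hcm (le_of_lt hmN) hle hlt
    have h0 : 0 ≤ v := le_trans (cpos_nonneg P e hP0 hmono m) hle
    have hNN : v < cpos P e ((K + 1) * (K + 1)) := lt_of_lt_of_le hlt (hcm hmN)
    exact ⟨⟨h0, h1, hNN, by rw [hpick]; exact hact⟩, by rw [hpick]; exact hmk⟩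

lemma AV_eq_union (s : Fin (K + 1)) : AV P e s = ⋃ i, AVi P e s i := by
  ext v
  simp only [Set.mem_iUnion, AVi, Set.mem_inter_iff, Set.mem_setOf_eq]
  constructor
  · intro h
    exact ⟨mkF K (pickL (cpos P e) ((K + 1) * (K + 1)) v), h, rfl⟩
  · rintro ⟨i, h, -⟩
    exact h

include hbij in
lemma rnk_inj (i : Fin (K + 1)) : Function.Injective (fun s => rnk e i s) := by
  intro s s' h
  have h2 : Function.invFun (e i) s = Function.invFun (e i) s' := Fin.ext h
  have := congrArg (e i) h2
  rwa [Function.invFun_eq ((hbij i).2 s), Function.invFun_eq ((hbij i).2 s')] at this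

include hP0 hmono hbij in
lemma count_bound (j : ℕ) (hj : j ≤ K + 1) (v v' : ℝ) (h0 : 0 ≤ v) (h1 : v < 1)
    (hlam : v < ∑ i, svc P e i j) :
    (Uset P e (v, v')).card ≤ j := by
  have hcm := cpos_mono P e hP0 hmono
  have hrow : v < cpos P e ((K + 1) * j) := by rwa [cpos_row]
  have hNN : v < cpos P e ((K + 1) * (K + 1)) :=
    lt_of_lt_of_le hrow (hcm (Nat.mul_le_mul_left _ hj))
  obtain ⟨hle, hlt, hltN⟩ := pickL_spec hcm (by simpa [cpos_zero] using h0) hNN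
  set m := pickL (cpos P e) ((K + 1) * (K + 1)) v with hm
  set r := m / (K + 1) with hr
  have hrj : r < j := by
    by_contra hcon
    push_neg at hcon
    have h2 : (K + 1) * j ≤ (K + 1) * r := Nat.mul_le_mul_left _ hcon
    have h3 : (K + 1) * r ≤ m := by
      rw [hr, Nat.mul_comm]
      exact Nat.div_mul_le_self m (K + 1)
    have : cpos P e ((K + 1) * j) ≤ cpos P e m := hcm (le_trans h2 h3)
    linarith
  have hsub : Uset P e (v, v') ⊆ insert (mkF K m)
      ((Finset.univ.filter (fun s => ¬ act e s m)).image
        (fun s => mkF K (pickR (G P e s) (K + 1) v'))) := by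
    intro x hx
    simp only [Uset, Finset.mem_image, Finset.mem_univ, true_and] at hx
    obtain ⟨s, hs⟩ := hx
    by_cases hact : act e s m
    · have hAV : v ∈ AV P e s := ⟨h0, h1, hNN, hact⟩
      rw [Finset.mem_insert]
      left
      rw [← hs]
      simp [sched, hAV, hm]
    · have hAV : v ∉ AV P e s := fun h => hact h.2.2.2
      rw [Finset.mem_insert]
      right
      rw [Finset.mem_image]
      refine ⟨s, ?_, ?_⟩
      · simp [hact]
      · rw [← hs]; simp [sched, hAV]
  calc (Uset P e (v, v')).card
      ≤ _ := Finset.card_le_card hsub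
    _ ≤ ((Finset.univ.filter (fun s => ¬ act e s m)).image
        (fun s => mkF K (pickR (G P e s) (K + 1) v'))).card + 1 := Finset.card_insert_le _ _
    _ ≤ (Finset.univ.filter (fun s => ¬ act e s m)).card + 1 :=
        Nat.add_le_add_right (Finset.card_image_le) 1
    _ ≤ r + 1 := by
        apply Nat.add_le_add_right
        have : (Finset.univ.filter (fun s => ¬ act e s m)).card ≤ (Finset.range r).card := by
          apply Finset.card_le_card_of_injOn (fun s => rnk e (mkF K m) s)
          · intro s hs
            simp only [Finset.mem_filter, Finset.mem_univ, true_and, act, not_le] at hs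
            simpa [Finset.mem_range] using hs
          · intro a _ b _ h
            exact rnk_inj e hbij (mkF K m) h
        simpa using this
    _ ≤ j := by omega

end ObfAux
end S4

section S5
namespace ObfAux
attribute [local instance] Classical.propDecidable
open Set Finset MeasureTheory

noncomputable def mu1 : Measure ℝ := volume.restrict (Set.Ioc 0 1)
noncomputable def mu2 : Measure (ℝ × ℝ) := mu1.prod mu1

instance : IsProbabilityMeasure mu1 :=
  ⟨by rw [mu1, Measure.restrict_apply_univ, Real.volume_Ioc]; norm_num⟩

instance : SFinite mu1 := by unfold mu1; infer_instance

instance : IsProbabilityMeasure mu2 := by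
  unfold mu2; infer_instance

lemma mu1_apply (X : Set ℝ) : mu1 X = volume (X ∩ Set.Ioc 0 1) :=
  Measure.restrict_apply' measurableSet_Ioc

lemma vol_piece {a b : ℝ} (ha : 0 ≤ a) (hab : a ≤ b) :
    mu1 (Ico a b ∩ Iio 1) = ENNReal.ofReal (min 1 b - min 1 a) := by
  rw [mu1_apply]
  rcases eq_or_lt_of_le ha with h0 | h0
  · have hset : Ico a b ∩ Iio 1 ∩ Set.Ioc 0 1 = Ioo 0 (min b 1) := by
      ext v
      simp only [Set.mem_inter_iff, Set.mem_Ico, Set.mem_Iio, Set.mem_Ioc, Set.mem_Ioo, lt_min_iff]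
      constructor
      · rintro ⟨⟨⟨hav, hvb⟩, hv1⟩, hv0, hv1'⟩
        exact ⟨hv0, hvb, hv1⟩
      · rintro ⟨hv0, hvb, hv1⟩
        exact ⟨⟨⟨by linarith, hvb⟩, hv1⟩, hv0, le_of_lt hv1⟩
    rw [hset, Real.volume_Ioo, ← h0]
    congr 1
    rw [min_comm b 1]
    have : min 1 (0:ℝ) = 0 := min_eq_right (by norm_num)
    rw [this, sub_zero]
  · have hset : Ico a b ∩ Iio 1 ∩ Set.Ioc 0 1 = Ico a (min b 1) := by
      ext v
      simp only [Set.mem_inter_iff, Set.mem_Ico, Set.mem_Iio, Set.mem_Ioc, lt_min_iff]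
      constructor
      · rintro ⟨⟨⟨hav, hvb⟩, hv1⟩, hv0, hv1'⟩
        exact ⟨hav, hvb, hv1⟩
      · rintro ⟨hav, hvb, hv1⟩
        exact ⟨⟨⟨hav, hvb⟩, hv1⟩, by linarith, le_of_lt hv1⟩
    rw [hset, Real.volume_Ico]
    rcases le_or_gt a 1 with h1 | h1
    · rw [min_eq_right h1, min_comm b 1]
    · have hmb : min b (1:ℝ) ≤ 1 := min_le_right b 1
      have hmb2 : min (1:ℝ) b ≤ 1 := min_le_left 1 b
      rw [ENNReal.ofReal_of_nonpos (by linarith), ENNReal.ofReal_of_nonpos]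
      rw [min_eq_left (le_of_lt h1)]
      linarith

variable {K : ℕ}
variable (P : Fin (K + 1) → Fin (K + 1) → ℝ) (e : Fin (K + 1) → Fin (K + 1) → Fin (K + 1))
variable (hP0 : ∀ i s, 0 ≤ P i s)
  (hmono : ∀ i, Monotone fun j => P i (e i j))
  (hbij : ∀ i, Function.Bijective (e i))

include hP0 hmono in
lemma AVi_meas (s i : Fin (K + 1)) : MeasurableSet (AVi P e s i) := by
  rw [AVi_eq P e hP0 hmono]
  exact (Tc e s i).measurableSet_biUnion
    (fun m _ => measurableSet_Ico.inter measurableSet_Iio)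

include hP0 hmono in
lemma AV_meas (s : Fin (K + 1)) : MeasurableSet (AV P e s) := by
  rw [AV_eq_union]
  exact MeasurableSet.iUnion (fun i => AVi_meas P e hP0 hmono s i)

include hP0 hmono in
lemma mu1_AVi (s i : Fin (K + 1)) :
    mu1 (AVi P e s i) = ENNReal.ofReal (aval P e s i) := by
  have hcm := cpos_mono P e hP0 hmono
  rw [AVi_eq P e hP0 hmono]
  rw [measure_biUnion_finset ?hd (fun m _ => measurableSet_Ico.inter measurableSet_Iio)]
  case hd =>
    intro m hm m' hm' hne
    simp only [Function.onFun]
    rw [Set.disjoint_left]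
    rintro v ⟨⟨h1, h2⟩, -⟩ ⟨⟨h3, h4⟩, -⟩
    rcases lt_or_gt_of_ne hne with h | h
    · have : cpos P e (m + 1) ≤ cpos P e m' := hcm h
      linarith
    · have : cpos P e (m' + 1) ≤ cpos P e m := hcm h
      linarith
  rw [aval, ENNReal.ofReal_sum_of_nonneg]
  · apply Finset.sum_congr rfl
    intro m _
    exact vol_piece (cpos_nonneg P e hP0 hmono m) (hcm (Nat.le_succ m))
  · intro m _
    simp only [sub_nonneg]
    exact min_le_min le_rfl (hcm (Nat.le_succ m))

include hP0 hmono in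
lemma mu1_AV (s : Fin (K + 1)) :
    mu1 (AV P e s) = ENNReal.ofReal (∑ i, aval P e s i) := by
  rw [AV_eq_union, measure_iUnion ?hd (fun i => AVi_meas P e hP0 hmono s i)]
  case hd =>
    intro i i' hne
    simp only [Function.onFun]
    rw [Set.disjoint_left]
    rintro v ⟨-, h1⟩ ⟨-, h2⟩
    exact hne (h1 ▸ h2 ▸ rfl)
  rw [tsum_fintype, ENNReal.ofReal_sum_of_nonneg
    (fun i _ => aval_nonneg P e hP0 hmono s i)]
  exact Finset.sum_congr rfl (fun i _ => mu1_AVi P e hP0 hmono s i)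

include hP0 hmono hbij in
lemma mu1_AV_compl (hsum : ∀ s, ∑ i, P i s = 1) (s : Fin (K + 1)) :
    mu1 ((AV P e s)ᶜ) = ENNReal.ofReal (Del P e s) := by
  have hA : Del P e s = 1 - ∑ i, aval P e s i := by
    unfold Del del
    rw [Finset.sum_sub_distrib, hsum s]
  rw [prob_compl_eq_one_sub (AV_meas P e hP0 hmono s), mu1_AV P e hP0 hmono s, hA,
    ← ENNReal.ofReal_one, ← ENNReal.ofReal_sub]
  exact Finset.sum_nonneg (fun i _ => aval_nonneg P e hP0 hmono s i)

lemma IFs_meas (s i : Fin (K + 1)) : MeasurableSet (IFs P e s i) := by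
  have h : Measurable (fun v' => mkF K (pickR (G P e s) (K + 1) v')) :=
    Measurable.comp' (measurable_from_top (f := mkF K))
      (pickR_mono (G P e s) (K + 1)).measurable
  exact h (measurableSet_singleton i)

include hP0 hmono hbij in
lemma mu1_IFs (s i : Fin (K + 1)) (hD : Del P e s ≠ 0) :
    mu1 (IFs P e s i) = ENNReal.ofReal (del P e s i / Del P e s) := by
  have hG := G_mono P e hP0 hmono hbij s
  have hset : IFs P e s i ∩ Set.Ioc 0 1 = Ioc (G P e s i.val) (G P e s (i.val + 1)) := by
    ext v'
    simp only [IFs, Set.mem_inter_iff, Set.mem_setOf_eq, Set.mem_Ioc]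
    constructor
    · rintro ⟨hmk, hv0, hv1⟩
      have hrle : pickR (G P e s) (K + 1) v' ≤ K + 1 := pickR_le _ _ _
      have hrne : pickR (G P e s) (K + 1) v' ≠ K + 1 := by
        intro h
        have := pickR_lt_self (c := G P e s) (N := K + 1) (v := v') (by omega)
        rw [h, G_last P e s hD] at this
        linarith
      have hrlt : pickR (G P e s) (K + 1) v' < K + 1 := by omega
      have hval : pickR (G P e s) (K + 1) v' = i.val := by
        have := mkF_small hrlt
        rw [this] at hmk
        exact congrArg Fin.val hmk
      constructor
      · rcases Nat.eq_zero_or_pos i.val with h0 | h0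
        · rw [h0, G_zero]
          exact hv0
        · have := pickR_lt_self (c := G P e s) (N := K + 1) (v := v') (by omega)
          rwa [hval] at this
      · have := pickR_not_lt (c := G P e s) (N := K + 1) (v := v')
          (k := i.val + 1) (by omega) (by omega)
        linarith [not_lt.1 this]
    · rintro ⟨h1, h2⟩
      have h0 : (0:ℝ) ≤ G P e s i.val := G_nonneg P e hP0 hmono hbij s i.val
      have hle1 : G P e s (i.val + 1) ≤ 1 := G_le_one P e hP0 hmono hbij s (i.val + 1)
      have hpick : pickR (G P e s) (K + 1) v' = i.val :=
        pickR_eq hG (by omega) h1 h2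
      refine ⟨?_, by linarith, by linarith⟩
      rw [hpick, mkF_val]
  rw [mu1_apply, hset, Real.volume_Ioc, G_succ_sub P e s i hD]

include hP0 hmono in
lemma sched_meas (s : Fin (K + 1)) : Measurable (sched P e s) := by
  have h1 : Measurable fun w : ℝ × ℝ => mkF K (pickL (cpos P e) ((K + 1) * (K + 1)) w.1) :=
    Measurable.comp' (measurable_from_top (f := mkF K))
      (Measurable.comp' (pickL_mono (cpos P e) ((K + 1) * (K + 1))).measurable measurable_fst)
  have h2 : Measurable fun w : ℝ × ℝ => mkF K (pickR (G P e s) (K + 1) w.2) :=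
    Measurable.comp' (measurable_from_top (f := mkF K))
      (Measurable.comp' (pickR_mono (G P e s) (K + 1)).measurable measurable_snd)
  unfold sched
  exact Measurable.ite ((AV_meas P e hP0 hmono s).preimage measurable_fst) h1 h2

include hP0 hmono hbij in
lemma sched_law (hsum : ∀ s, ∑ i, P i s = 1) (s i : Fin (K + 1)) :
    mu2 {w | sched P e s w = i} = ENNReal.ofReal (P i s) := by
  rw [fiber_eq]
  have hdis : Disjoint (AVi P e s i ×ˢ (univ : Set ℝ)) ((AV P e s)ᶜ ×ˢ IFs P e s i) := by
    rw [Set.disjoint_left]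
    rintro ⟨v, v'⟩ ⟨hv, -⟩ ⟨hv', -⟩
    exact hv' hv.1
  rw [measure_union hdis (((AV_meas P e hP0 hmono s).compl).prod (IFs_meas P e s i))]
  unfold mu2
  rw [Measure.prod_prod, Measure.prod_prod, measure_univ, mul_one,
    mu1_AVi P e hP0 hmono s i, mu1_AV_compl P e hP0 hmono hbij hsum s]
  rcases eq_or_ne (Del P e s) 0 with hD | hD
  · have hdel : del P e s i = 0 := del_eq_zero_of_Del P e hP0 hmono hbij s hD i
    have : P i s = aval P e s i := by
      have := hdel
      unfold del at this
      linarith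
    rw [hD, this]
    simp
  · rw [mu1_IFs P e hP0 hmono hbij s i hD,
      ← ENNReal.ofReal_mul (Del_nonneg P e hP0 hmono hbij s),
      mul_comm (Del P e s), div_mul_cancel₀ _ hD,
      ← ENNReal.ofReal_add (aval_nonneg P e hP0 hmono s i)
        (del_nonneg P e hP0 hmono hbij s i)]
    congr 1
    unfold del
    ring

include hP0 hmono in
lemma Uset_meas : Measurable (Uset P e) := by
  apply measurable_to_countable'
  intro u
  have hset : Uset P e ⁻¹' {u} = ⋃ (φ : Fin (K + 1) → Fin (K + 1))
      (_ : Finset.univ.image φ = u), ⋂ s, {w | sched P e s w = φ s} := by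
    ext w
    simp only [Set.mem_preimage, Set.mem_singleton_iff, Set.mem_iUnion, Set.mem_iInter,
      Set.mem_setOf_eq, exists_prop]
    constructor
    · intro h
      exact ⟨fun s => sched P e s w, h, fun s => rfl⟩
    · rintro ⟨φ, hφ, h⟩
      rw [← hφ]
      unfold Uset
      exact Finset.image_congr (fun s _ => h s)
  rw [hset]
  exact MeasurableSet.iUnion fun φ => MeasurableSet.iUnion fun _ =>
    MeasurableSet.iInter fun s => sched_meas P e hP0 hmono s (measurableSet_singleton _)

end ObfAux
end S5


/-- **Lemma 1 (obfuscation lemma).**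
Let `(S, X)` have joint law `p` on `[K] × [K]` with `P(S = s) > 0` for all `s`, and for each
`i ∈ [K]` let `s_{i,1}, …, s_{i,K}` (here `e i`) enumerate `[K]` so that
`j ↦ P(X = i | S = s_{i,j})` is nondecreasing; with `λ_0 = 0`,
`λ_j = Σ_i P(X = i | S = s_{i,j})` and `θ_j = min 1 λ_j − min 1 λ_{j−1}`.
Then there exists a probability space carrying random variables `(S, X, U)` such that `(S, X)` has
joint law `p`, `U` takes values in the nonempty subsets of `[K]`, `X ∈ U` almost surely, `U` is
independent of `S`, and `P(|U| ≤ i) ≥ Σ_{j=1}^{i} θ_j` for every `i ∈ [K]`. -/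
theorem obfuscation_lemma
    (K : ℕ) (hK : 1 ≤ K)
    (p : Measure (Fin K × Fin K)) [IsProbabilityMeasure p]
    (hpos : ∀ s : Fin K, 0 < p {q | q.1 = s})
    (e : Fin K → Fin K → Fin K)
    (hbij : ∀ i, Function.Bijective (e i))
    (condP : Fin K → Fin K → ℝ)
    (hcondP : ∀ i s : Fin K,
      condP i s = (p {(s, i)}).toReal / (p {q | q.1 = s}).toReal)
    (hmono : ∀ i : Fin K, Monotone fun j => condP i (e i j))
    (lam : ℕ → ℝ)
    (hlam0 : lam 0 = 0)
    (hlam : ∀ j : Fin K, lam (j + 1) = ∑ i : Fin K, condP i (e i j))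
    (θ : ℕ → ℝ)
    (hθ : ∀ j : ℕ, 1 ≤ j → j ≤ K → θ j = min 1 (lam j) - min 1 (lam (j - 1))) :
    ∃ (Ω : Type) (_ : MeasurableSpace Ω) (μ : Measure Ω) (_ : IsProbabilityMeasure μ)
      (S X : Ω → Fin K) (U : Ω → Finset (Fin K)),
      Measurable S ∧ Measurable X ∧ Measurable U ∧
      μ.map (fun ω => (S ω, X ω)) = p ∧
      (∀ ω, (U ω).Nonempty) ∧
      (∀ᵐ ω ∂μ, X ω ∈ U ω) ∧
      IndepFun U S μ ∧
      ∀ i : ℕ, 1 ≤ i → i ≤ K →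
        (∑ j ∈ Finset.Icc 1 i, θ j) ≤ (μ {ω | (U ω).card ≤ i}).toReal := by

  classical
  obtain ⟨K', rfl⟩ : ∃ K', K = K' + 1 := ⟨K - 1, by omega⟩
  -- basic facts about `condP`
  have hP0 : ∀ i s, 0 ≤ condP i s := fun i s => by
    rw [hcondP]
    exact div_nonneg ENNReal.toReal_nonneg ENNReal.toReal_nonneg
  have hbne : ∀ s, p {q | q.1 = s} ≠ 0 := fun s => (hpos s).ne'
  have hbnt : ∀ s, p {q | q.1 = s} ≠ ⊤ := fun s => measure_ne_top p _
  have hant : ∀ s i, p {((s, i) : Fin (K'+1) × Fin (K'+1))} ≠ ⊤ := fun s i => measure_ne_top p _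
  have hkey : ∀ s, p {q | q.1 = s} = ∑ i, p {((s, i) : Fin (K'+1) × Fin (K'+1))} := by
    intro s
    have hset : {q : Fin (K'+1) × Fin (K'+1) | q.1 = s} = ⋃ i, {(s, i)} := by
      ext ⟨a, b⟩
      simp only [Set.mem_setOf_eq, Set.mem_iUnion, Set.mem_singleton_iff, Prod.mk.injEq]
      constructor
      · rintro rfl; exact ⟨b, rfl, rfl⟩
      · rintro ⟨i, rfl, rfl⟩; rfl
    rw [hset, measure_iUnion ?hd (fun i => measurableSet_singleton _), tsum_fintype]
    case hd =>
      intro i i' hne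
      simp only [Function.onFun, Set.disjoint_singleton]
      intro h
      exact hne (Prod.ext_iff.1 h).2
  have hsum : ∀ s, ∑ i, condP i s = 1 := by
    intro s
    have hbt : (p {q | q.1 = s}).toReal ≠ 0 :=
      (ENNReal.toReal_pos (hbne s) (hbnt s)).ne'
    have : ∑ i, condP i s = (∑ i, (p {((s, i) : Fin (K'+1) × Fin (K'+1))}).toReal)
        / (p {q | q.1 = s}).toReal := by
      rw [Finset.sum_div]
      exact Finset.sum_congr rfl fun i _ => hcondP i s
    rw [this, ← ENNReal.toReal_sum (fun i _ => hant s i), ← hkey s, div_self hbt]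
  have hofReal : ∀ s i, ENNReal.ofReal (condP i s)
      = p {((s, i) : Fin (K'+1) × Fin (K'+1))} / p {q | q.1 = s} := by
    intro s i
    rw [hcondP, ENNReal.ofReal_div_of_pos (ENNReal.toReal_pos (hbne s) (hbnt s)),
      ENNReal.ofReal_toReal (hant s i), ENNReal.ofReal_toReal (hbnt s)]
  -- the construction
  set ν : Measure (Fin (K'+1)) := p.map Prod.fst with hν
  have hνs : ∀ s, ν {s} = p {q | q.1 = s} := by
    intro s
    rw [hν, Measure.map_apply measurable_fst (measurableSet_singleton s)]
    rfl
  haveI : IsProbabilityMeasure ν := Measure.isProbabilityMeasure_map measurable_fst.aemeasurable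
  refine ⟨Fin (K'+1) × (ℝ × ℝ), inferInstance, ν.prod ObfAux.mu2, inferInstance,
    Prod.fst, (fun ω => ObfAux.sched condP e ω.1 ω.2), (fun ω => ObfAux.Uset condP e ω.2),
    measurable_fst, ?_, ?_, ?_, ?_, ?_, ?_, ?_⟩
  · -- Measurable X
    apply measurable_to_countable'
    intro i
    have hset : (fun ω : Fin (K'+1) × (ℝ × ℝ) => ObfAux.sched condP e ω.1 ω.2) ⁻¹' {i}
        = ⋃ s, ({s} ×ˢ (ObfAux.sched condP e s ⁻¹' {i})) := by
      ext ⟨a, w⟩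
      simp only [Set.mem_preimage, Set.mem_singleton_iff, Set.mem_iUnion, Set.mem_prod]
      constructor
      · intro h; exact ⟨a, rfl, h⟩
      · rintro ⟨s, rfl, h⟩; exact h
    rw [hset]
    exact MeasurableSet.iUnion fun s => (measurableSet_singleton s).prod
      (ObfAux.sched_meas condP e hP0 hmono s (measurableSet_singleton i))
  · -- Measurable U
    exact (ObfAux.Uset_meas condP e hP0 hmono).comp measurable_snd
  · -- the law of (S, X)
    rw [MeasureTheory.Measure.ext_iff_singleton]
    rintro ⟨s, i⟩
    have hg : Measurable (fun ω : Fin (K'+1) × (ℝ × ℝ) =>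
        (ω.1, ObfAux.sched condP e ω.1 ω.2)) := by
      apply Measurable.prodMk measurable_fst
      apply measurable_to_countable'
      intro i
      have hset : (fun ω : Fin (K'+1) × (ℝ × ℝ) => ObfAux.sched condP e ω.1 ω.2) ⁻¹' {i}
          = ⋃ s, ({s} ×ˢ (ObfAux.sched condP e s ⁻¹' {i})) := by
        ext ⟨a, w⟩
        simp only [Set.mem_preimage, Set.mem_singleton_iff, Set.mem_iUnion, Set.mem_prod]
        constructor
        · intro h; exact ⟨a, rfl, h⟩
        · rintro ⟨s, rfl, h⟩; exact h
      rw [hset]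
      exact MeasurableSet.iUnion fun s => (measurableSet_singleton s).prod
        (ObfAux.sched_meas condP e hP0 hmono s (measurableSet_singleton i))
    rw [Measure.map_apply hg (measurableSet_singleton _)]
    have hpre : (fun ω : Fin (K'+1) × (ℝ × ℝ) => (ω.1, ObfAux.sched condP e ω.1 ω.2)) ⁻¹'
        {(s, i)} = {s} ×ˢ {w | ObfAux.sched condP e s w = i} := by
      ext ⟨a, w⟩
      simp only [Set.mem_preimage, Set.mem_singleton_iff, Prod.mk.injEq, Set.mem_prod,
        Set.mem_setOf_eq]
      constructor
      · rintro ⟨rfl, h⟩; exact ⟨rfl, h⟩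
      · rintro ⟨rfl, h⟩; exact ⟨rfl, h⟩
    rw [hpre, Measure.prod_prod, hνs s,
      ObfAux.sched_law condP e hP0 hmono hbij hsum s i, hofReal s i,
      ENNReal.mul_div_cancel (hbne s) (hbnt s)]
  · -- U nonempty
    exact fun ω => ObfAux.Uset_nonempty condP e ω.2
  · -- X ∈ U a.s.
    exact MeasureTheory.ae_of_all _ (fun ω => ObfAux.mem_Uset condP e ω.1 ω.2)
  · -- independence
    rw [ProbabilityTheory.indepFun_iff_measure_inter_preimage_eq_mul]
    intro A B hA hB
    have h1 : (fun ω : Fin (K'+1) × (ℝ × ℝ) => ObfAux.Uset condP e ω.2) ⁻¹' A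
        = (Set.univ : Set (Fin (K'+1))) ×ˢ (ObfAux.Uset condP e ⁻¹' A) := by
      ext ⟨a, w⟩; simp [Set.mem_prod]
    have h2 : (Prod.fst : Fin (K'+1) × (ℝ × ℝ) → Fin (K'+1)) ⁻¹' B
        = B ×ˢ (Set.univ : Set (ℝ × ℝ)) := by
      ext ⟨a, w⟩; simp [Set.mem_prod]
    have h3 : ((Set.univ : Set (Fin (K'+1))) ×ˢ (ObfAux.Uset condP e ⁻¹' A))
        ∩ (B ×ˢ (Set.univ : Set (ℝ × ℝ))) = B ×ˢ (ObfAux.Uset condP e ⁻¹' A) := by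
      ext ⟨a, w⟩
      simp only [Set.mem_inter_iff, Set.mem_prod, Set.mem_univ, true_and, and_true]
      tauto
    rw [h1, h2, h3, Measure.prod_prod, Measure.prod_prod, Measure.prod_prod,
      measure_univ, measure_univ]
    ring
  · -- the cardinality bound
    intro i h1i hiK
    -- the telescoping sum
    have hθsum : ∑ j ∈ Finset.Icc 1 i, θ j = min 1 (lam i) := by
      rw [Finset.sum_congr rfl (fun j hj => hθ j (Finset.mem_Icc.1 hj).1
        (le_trans (Finset.mem_Icc.1 hj).2 hiK))]
      have htel : ∀ n : ℕ,
          ∑ j ∈ Finset.Icc 1 n, (min 1 (lam j) - min 1 (lam (j - 1)))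
            = min 1 (lam n) - min 1 (lam 0) := by
        intro n
        induction n with
        | zero => simp
        | succ n ih =>
          rw [Finset.sum_Icc_succ_top (by omega : 1 ≤ n + 1), ih]
          have : n + 1 - 1 = n := by omega
          rw [this]
          ring
      rw [htel i, hlam0]
      simp
    obtain ⟨j0, hj0⟩ : ∃ j0 : Fin (K' + 1), (j0 : ℕ) = i - 1 := ⟨⟨i - 1, by omega⟩, rfl⟩
    have hlami : lam i = ∑ t, ObfAux.svc condP e t i := by
      have h1 := hlam j0
      have hji : (j0 : ℕ) + 1 = i := by omega
      rw [hji] at h1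
      rw [h1]
      apply Finset.sum_congr rfl
      intro t _
      have hcl : ObfAux.clampF K' (i - 1) = j0 := by
        apply Fin.ext
        have := j0.isLt
        simp only [ObfAux.clampF]
        omega
      rw [ObfAux.svc, if_neg (by omega : ¬ i = 0), hcl]
    have hlam_nonneg : 0 ≤ lam i := by
      rw [hlami]
      apply Finset.sum_nonneg
      intro t _
      rw [ObfAux.svc]
      split
      · exact le_rfl
      · exact hP0 _ _
    set L := min 1 (lam i) with hL
    have hL0 : 0 ≤ L := le_min zero_le_one hlam_nonneg
    have hL1 : L ≤ 1 := min_le_left _ _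
    have hsub : (Set.univ : Set (Fin (K'+1))) ×ˢ ((Set.Ioo (0:ℝ) L) ×ˢ (Set.univ : Set ℝ))
        ⊆ {ω : Fin (K'+1) × (ℝ × ℝ) | (ObfAux.Uset condP e ω.2).card ≤ i} := by
      rintro ⟨a, v, v'⟩ ⟨-, ⟨h0v, hvL⟩, -⟩
      have hv1 : v < 1 := lt_of_lt_of_le hvL hL1
      have hvlam : v < ∑ t, ObfAux.svc condP e t i := by
        rw [← hlami]
        exact lt_of_lt_of_le hvL (min_le_right _ _)
      exact ObfAux.count_bound condP e hP0 hmono hbij i hiK v v' h0v.le hv1 hvlam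
    have hmeasL : (ν.prod ObfAux.mu2)
        ((Set.univ : Set (Fin (K'+1))) ×ˢ ((Set.Ioo (0:ℝ) L) ×ˢ (Set.univ : Set ℝ)))
        = ENNReal.ofReal L := by
      rw [Measure.prod_prod]
      rw [ObfAux.mu2, Measure.prod_prod]
      rw [measure_univ, measure_univ, one_mul, mul_one]
      rw [ObfAux.mu1_apply]
      have : Set.Ioo (0:ℝ) L ∩ Set.Ioc 0 1 = Set.Ioo 0 L := by
        apply Set.inter_eq_left.2
        intro v hv
        exact ⟨hv.1, le_trans hv.2.le hL1⟩
      rw [this, Real.volume_Ioo, sub_zero]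
    calc ∑ j ∈ Finset.Icc 1 i, θ j = L := hθsum
      _ = (ENNReal.ofReal L).toReal := (ENNReal.toReal_ofReal hL0).symm
      _ ≤ _ := by
          apply ENNReal.toReal_mono (measure_ne_top _ _)
          rw [← hmeasL]
          exact measure_mono hsub
end

section
/- Let S, X, U, Q be random variables defined on a probability space, each taking values in a finite (or standard Borel) measurable space. Assume that U is independent of S, that Q is conditionally independent of X given U, and that Q is conditionally independent of S given the pair (X, U). Then Q is independent of S. -/
open MeasureTheory ProbabilityTheory

section Aux

variable {Ω : Type*} {mΩ : MeasurableSpace Ω} {μ : Measure Ω} [IsProbabilityMeasure μ]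

omit [IsProbabilityMeasure μ] in
/-- indicator-of-one set integral equals measure (real-valued). -/
lemma aux_setIntegral_indicator_one {P E : Set Ω} (hP : MeasurableSet P) :
    ∫ x in E, P.indicator (fun _ => (1 : ℝ)) x ∂μ = (μ (E ∩ P)).toReal := by
  rw [MeasureTheory.setIntegral_indicator hP, setIntegral_const, smul_eq_mul, mul_one, measureReal_def]

lemma aux_indicator_mul (P : Set Ω) (f : Ω → ℝ) (x : Ω) :
    P.indicator f x = P.indicator (fun _ => (1 : ℝ)) x * f x := by
  by_cases h : x ∈ P <;> simp [Set.indicator_apply, h]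

end Aux

/-- **Privacy of the concatenation scheme.** Let `S`, `X`, `U`, `Q` be random variables on a
probability space, each taking values in a standard Borel measurable space. If `U` is independent
of `S`, `Q` is conditionally independent of `X` given `U`, and `Q` is conditionally independent of
`S` given the pair `(X, U)`, then `Q` is independent of `S`. -/
theorem indepFun_of_obfuscation
    {Ω 𝓢 𝓧 𝓤 𝓠 : Type*}
    [MeasurableSpace Ω] [StandardBorelSpace Ω] [Nonempty Ω]
    [MeasurableSpace 𝓢] [StandardBorelSpace 𝓢]
    [MeasurableSpace 𝓧] [StandardBorelSpace 𝓧]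
    [MeasurableSpace 𝓤] [StandardBorelSpace 𝓤]
    [MeasurableSpace 𝓠] [StandardBorelSpace 𝓠]
    (μ : Measure Ω) [IsProbabilityMeasure μ]
    (S : Ω → 𝓢) (X : Ω → 𝓧) (U : Ω → 𝓤) (Q : Ω → 𝓠)
    (hS : Measurable S) (hX : Measurable X) (hU : Measurable U) (hQ : Measurable Q)
    (hUS : IndepFun U S μ)
    (hQX : CondIndepFun (MeasurableSpace.comap U inferInstance) hU.comap_le Q X μ)
    (hQS : CondIndepFun (MeasurableSpace.comap (fun ω => (X ω, U ω)) inferInstance)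
      (hX.prodMk hU).comap_le Q S μ) :
    IndepFun Q S μ := by
  have hUle : (MeasurableSpace.comap U inferInstance) ≤ ‹MeasurableSpace Ω› := hU.comap_le
  have hXUle : (MeasurableSpace.comap (fun ω => (X ω, U ω)) inferInstance) ≤ ‹MeasurableSpace Ω› := (hX.prodMk hU).comap_le
  have hUXU : (MeasurableSpace.comap U inferInstance) ≤ (MeasurableSpace.comap (fun ω => (X ω, U ω)) inferInstance) := by
    intro s hs
    obtain ⟨t, ht, rfl⟩ := hs
    exact ⟨Set.univ ×ˢ t, MeasurableSet.univ.prod ht, by ext ω; simp⟩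
  have hXinXU : ∀ {C : Set 𝓧}, MeasurableSet C → MeasurableSet[(MeasurableSpace.comap (fun ω => (X ω, U ω)) inferInstance)] (X ⁻¹' C) := by
    intro C hC
    exact ⟨C ×ˢ Set.univ, hC.prod MeasurableSet.univ, by ext ω; simp⟩
  -- translate the conditional independence hypotheses
  rw [condIndepFun_iff_condExp_inter_preimage_eq_mul hQ hX] at hQX
  rw [condIndepFun_iff_condExp_inter_preimage_eq_mul hQ hS] at hQS
  rw [indepFun_iff_measure_inter_preimage_eq_mul]
  intro tQ tS htQ htS
  set A : Set Ω := Q ⁻¹' tQ with hA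
  set B : Set Ω := S ⁻¹' tS with hB
  have hAmeas : MeasurableSet A := hQ htQ
  have hBmeas : MeasurableSet B := hS htS
  set indA : Ω → ℝ := A.indicator (fun _ => (1 : ℝ)) with hindA
  set indB : Ω → ℝ := B.indicator (fun _ => (1 : ℝ)) with hindB
  have hindA_int : Integrable indA μ := (integrable_const (1 : ℝ)).indicator hAmeas
  have hindB_int : Integrable indB μ := (integrable_const (1 : ℝ)).indicator hBmeas
  set g : Ω → ℝ := μ[indA | (MeasurableSpace.comap U inferInstance)] with hg
  have hg_sm : StronglyMeasurable[(MeasurableSpace.comap U inferInstance)] g := stronglyMeasurable_condExp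
  have hg_int : Integrable g μ := integrable_condExp
  -- Step 1: `μ⟦A | (MeasurableSpace.comap (fun ω => (X ω, U ω)) inferInstance)⟧ = μ⟦A | (MeasurableSpace.comap U inferInstance)⟧` a.e. (contraction using Q ⊥ X | U).
  have hkey : g =ᵐ[μ] μ[indA | (MeasurableSpace.comap (fun ω => (X ω, U ω)) inferInstance)] := by
    refine ae_eq_condExp_of_forall_setIntegral_eq hXUle hindA_int
      (fun s _ _ => hg_int.integrableOn) (fun E hE _ => ?_)
      (hg_sm.mono hUXU).aestronglyMeasurable
    -- reduce to the π-system of rectangles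
    revert E
    have h_eq : (MeasurableSpace.comap (fun ω => (X ω, U ω)) inferInstance) = MeasurableSpace.generateFrom
        {s : Set Ω | ∃ t ∈ Set.image2 (· ×ˢ ·) { s : Set 𝓧 | MeasurableSet s }
          { t : Set 𝓤 | MeasurableSet t }, (fun ω => (X ω, U ω)) ⁻¹' t = s} := by
      rw [← generateFrom_prod, MeasurableSpace.comap_generateFrom]
      congr 1
    have h_pi := isPiSystem_prod.comap (fun ω => (X ω, U ω))
    intro E hE _
    refine @MeasurableSpace.induction_on_inter Ω
      (MeasurableSpace.comap (fun ω => (X ω, U ω)) inferInstance)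
      (fun E _ => ∫ x in E, g x ∂μ = ∫ x in E, indA x ∂μ) _ h_eq h_pi ?_ ?_ ?_ ?_ E hE
    · simp
    · -- basic rectangles
      rintro _ ⟨_, ⟨C, hC, D, hD, rfl⟩, rfl⟩
      have hECD : (fun ω => (X ω, U ω)) ⁻¹' C ×ˢ D = X ⁻¹' C ∩ U ⁻¹' D := by
        ext ω; simp
      rw [hECD]
      have hDmU : MeasurableSet[(MeasurableSpace.comap U inferInstance)] (U ⁻¹' D) := ⟨D, hD, rfl⟩
      have hDmeas : MeasurableSet (U ⁻¹' D) := hU hD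
      have hCmeas : MeasurableSet (X ⁻¹' C) := hX hC
      set indC : Ω → ℝ := (X ⁻¹' C).indicator (fun _ => (1 : ℝ)) with hindC
      set indD : Ω → ℝ := (U ⁻¹' D).indicator (fun _ => (1 : ℝ)) with hindD
      have hindC_int : Integrable indC μ := (integrable_const (1 : ℝ)).indicator hCmeas
      have hψ_sm : StronglyMeasurable[(MeasurableSpace.comap U inferInstance)] (fun ω => indD ω * g ω) :=
        (stronglyMeasurable_const.indicator hDmU).mul hg_sm
      have hψ_int : Integrable (fun ω => indD ω * g ω) μ := by
        refine hg_int.bdd_mul (c := 1) ?_ (ae_of_all _ fun x => ?_)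
        · exact ((measurable_const.indicator hDmeas)).aestronglyMeasurable
        · rw [hindD]; by_cases h : x ∈ U ⁻¹' D <;> simp [Set.indicator_apply, h]
      have hψC_int : Integrable ((fun ω => indD ω * g ω) * indC) μ := by
        have h' : Integrable (fun ω => indC ω * (indD ω * g ω)) μ := by
          refine hψ_int.bdd_mul (c := 1) (measurable_const.indicator hCmeas).aestronglyMeasurable
            (ae_of_all _ fun x => ?_)
          by_cases h : x ∈ X ⁻¹' C <;> simp [hindC, Set.indicator_apply, h]
        exact h'.congr (by filter_upwards with x; exact mul_comm _ _)
      -- pull-out on the left-hand side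
      have hpull : μ[(fun ω => indD ω * g ω) * indC | (MeasurableSpace.comap U inferInstance)]
          =ᵐ[μ] (fun ω => indD ω * g ω) * μ[indC | (MeasurableSpace.comap U inferInstance)] :=
        condExp_mul_of_stronglyMeasurable_left hψ_sm hψC_int hindC_int
      have hLHS : ∫ x in X ⁻¹' C ∩ U ⁻¹' D, g x ∂μ
          = ∫ x, indD x * g x * (μ[indC | (MeasurableSpace.comap U inferInstance)]) x ∂μ := by
        have h1 : ∫ x in X ⁻¹' C ∩ U ⁻¹' D, g x ∂μ
            = ∫ x, ((fun ω => indD ω * g ω) * indC) x ∂μ := by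
          rw [← integral_indicator (hCmeas.inter hDmeas)]
          congr 1
          ext x
          by_cases h1 : x ∈ X ⁻¹' C <;> by_cases h2 : x ∈ U ⁻¹' D <;>
            simp [Set.indicator_apply, h1, h2, hindC, hindD, mul_comm]
        rw [h1, ← integral_condExp hUle, integral_congr_ae hpull]
        rfl
      -- compute the right-hand side using Q ⊥ X | U
      have hQXst := hQX tQ C htQ hC
      have hRHS : ∫ x in X ⁻¹' C ∩ U ⁻¹' D, indA x ∂μ
          = ∫ x, indD x * g x * (μ[indC | (MeasurableSpace.comap U inferInstance)]) x ∂μ := by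
        have h2 : ∫ x in X ⁻¹' C ∩ U ⁻¹' D, indA x ∂μ
            = ∫ x in U ⁻¹' D, (A ∩ X ⁻¹' C).indicator (fun _ => (1 : ℝ)) x ∂μ := by
          rw [aux_setIntegral_indicator_one hAmeas,
            aux_setIntegral_indicator_one (hAmeas.inter hCmeas)]
          have hsets : X ⁻¹' C ∩ U ⁻¹' D ∩ A = U ⁻¹' D ∩ (A ∩ X ⁻¹' C) := by
            ext x; simp only [Set.mem_inter_iff]; tauto
          rw [hsets]
        rw [h2, ← setIntegral_condExp hUle
            ((integrable_const (1 : ℝ)).indicator (hAmeas.inter hCmeas)) hDmU]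
        rw [setIntegral_congr_ae (hUle _ hDmU) (hQXst.mono fun x hx _ => hx)]
        rw [← integral_indicator (hUle _ hDmU)]
        congr 1
        ext x
        by_cases h2 : x ∈ U ⁻¹' D <;> simp [Set.indicator_apply, h2, hindD] <;> rfl
      rw [hLHS, hRHS]
    · -- complements
      intro E hE hCE
      have hEmeas : MeasurableSet E := hXUle _ hE
      have h1 : ∫ x in E, g x ∂μ + ∫ x in Eᶜ, g x ∂μ = ∫ x, g x ∂μ :=
        integral_add_compl hEmeas hg_int
      have h2 : ∫ x in E, indA x ∂μ + ∫ x in Eᶜ, indA x ∂μ = ∫ x, indA x ∂μ :=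
        integral_add_compl hEmeas hindA_int
      have h3 : ∫ x, g x ∂μ = ∫ x, indA x ∂μ := integral_condExp hUle
      linarith
    · -- countable disjoint unions
      intro f hdisj hmeas hCf
      have hmeas' : ∀ i, MeasurableSet (f i) := fun i => hXUle _ (hmeas i)
      rw [integral_iUnion hmeas' hdisj hg_int.integrableOn,
        integral_iUnion hmeas' hdisj hindA_int.integrableOn]
      exact tsum_congr hCf
  -- Step 2: conclude
  have hQSst := hQS tQ tS htQ htS
  -- independence of U and S gives that `μ⟦B | (MeasurableSpace.comap U inferInstance)⟧` is a.e. constant `μ B`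
  have hBU : (μ[indB | (MeasurableSpace.comap U inferInstance)]) =ᵐ[μ] fun _ => (μ B).toReal := by
    have hindB_sm : StronglyMeasurable[MeasurableSpace.comap S inferInstance] indB :=
      stronglyMeasurable_const.indicator ⟨tS, htS, rfl⟩
    have hIndep : ProbabilityTheory.Indep (MeasurableSpace.comap S inferInstance) (MeasurableSpace.comap U inferInstance) μ :=
      hUS.symm
    have := condExp_indep_eq hS.comap_le hUle hindB_sm hIndep
    refine this.trans ?_
    have : ∫ x, indB x ∂μ = (μ B).toReal := by
      rw [hindB, integral_indicator hBmeas, setIntegral_const, smul_eq_mul, mul_one, measureReal_def]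
    simp [this]
  -- integrability facts
  have h_gB_int : Integrable (g * indB) μ := by
    have : Integrable (fun x => indB x * g x) μ := by
      refine hg_int.bdd_mul (c := 1) (measurable_const.indicator hBmeas).aestronglyMeasurable
        (ae_of_all _ fun x => ?_)
      rw [hindB]; by_cases h : x ∈ B <;> simp [Set.indicator_apply, h]
    exact this.congr (by filter_upwards with x; exact mul_comm _ _)
  -- pull-out at (MeasurableSpace.comap (fun ω => (X ω, U ω)) inferInstance) and at (MeasurableSpace.comap U inferInstance)
  have hpullXU : μ[g * indB | (MeasurableSpace.comap (fun ω => (X ω, U ω)) inferInstance)] =ᵐ[μ] g * μ[indB | (MeasurableSpace.comap (fun ω => (X ω, U ω)) inferInstance)] :=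
    condExp_mul_of_stronglyMeasurable_left (hg_sm.mono hUXU) h_gB_int hindB_int
  have hpullU : μ[g * indB | (MeasurableSpace.comap U inferInstance)] =ᵐ[μ] g * μ[indB | (MeasurableSpace.comap U inferInstance)] :=
    condExp_mul_of_stronglyMeasurable_left hg_sm h_gB_int hindB_int
  -- the chain of equalities
  have hchain : (μ (A ∩ B)).toReal = (μ A).toReal * (μ B).toReal := by
    have e1 : (μ (A ∩ B)).toReal
        = ∫ x, (A ∩ B).indicator (fun _ => (1 : ℝ)) x ∂μ := by
      rw [integral_indicator (hAmeas.inter hBmeas), setIntegral_const, smul_eq_mul, mul_one, measureReal_def]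
    have e2 : ∫ x, (A ∩ B).indicator (fun _ => (1 : ℝ)) x ∂μ
        = ∫ x, (μ[(A ∩ B).indicator (fun _ => (1 : ℝ)) | (MeasurableSpace.comap (fun ω => (X ω, U ω)) inferInstance)]) x ∂μ :=
      (integral_condExp hXUle).symm
    have e3 : ∫ x, (μ[(A ∩ B).indicator (fun _ => (1 : ℝ)) | (MeasurableSpace.comap (fun ω => (X ω, U ω)) inferInstance)]) x ∂μ
        = ∫ x, (μ[indA | (MeasurableSpace.comap (fun ω => (X ω, U ω)) inferInstance)]) x * (μ[indB | (MeasurableSpace.comap (fun ω => (X ω, U ω)) inferInstance)]) x ∂μ :=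
      integral_congr_ae hQSst
    have e4 : ∫ x, (μ[indA | (MeasurableSpace.comap (fun ω => (X ω, U ω)) inferInstance)]) x * (μ[indB | (MeasurableSpace.comap (fun ω => (X ω, U ω)) inferInstance)]) x ∂μ
        = ∫ x, (g * μ[indB | (MeasurableSpace.comap (fun ω => (X ω, U ω)) inferInstance)]) x ∂μ := by
      refine integral_congr_ae ?_
      filter_upwards [hkey] with x hx
      simp [Pi.mul_apply, hx]
    have e5 : ∫ x, (g * μ[indB | (MeasurableSpace.comap (fun ω => (X ω, U ω)) inferInstance)]) x ∂μ = ∫ x, (g * indB) x ∂μ := by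
      rw [← integral_congr_ae hpullXU, integral_condExp hXUle]
    have e6 : ∫ x, (g * indB) x ∂μ = ∫ x, (g * μ[indB | (MeasurableSpace.comap U inferInstance)]) x ∂μ := by
      rw [← integral_congr_ae hpullU, integral_condExp hUle]
    have e7 : ∫ x, (g * μ[indB | (MeasurableSpace.comap U inferInstance)]) x ∂μ = (μ B).toReal * ∫ x, g x ∂μ := by
      rw [← integral_const_mul]
      refine integral_congr_ae ?_
      filter_upwards [hBU] with x hx
      simp [Pi.mul_apply, hx, mul_comm]
    have e8 : ∫ x, g x ∂μ = (μ A).toReal := by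
      rw [hg, integral_condExp hUle, hindA, integral_indicator hAmeas, setIntegral_const,
        smul_eq_mul, mul_one, measureReal_def]
    rw [e1, e2, e3, e4, e5, e6, e7, e8, mul_comm]
  have hfin : μ (A ∩ B) ≠ ⊤ := measure_ne_top μ _
  have hfinA : μ A ≠ ⊤ := measure_ne_top μ _
  have hfinB : μ B ≠ ⊤ := measure_ne_top μ _
  rw [← ENNReal.toReal_eq_toReal_iff' hfin (ENNReal.mul_ne_top hfinA hfinB), ENNReal.toReal_mul]
  exact hchain
end

section
/- Suppose that for every t ∈ {0, …, T}, Y_t is conditionally independent of X_{τ(t)} given the tuple (Y_0, …, Y_{t−1}). Then for every t ∈ {0, …, T}, Y_t is conditionally independent of the tuple (X_j)_{j ∈ 𝒫 ∩ {0, …, t}} given (Y_0, …, Y_{t−1}). -/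
open MeasureTheory ProbabilityTheory

section Aux2

variable {Ω : Type*}

lemma indicator_int' {mΩ : MeasurableSpace Ω} {μ : Measure Ω} [IsProbabilityMeasure μ] (A : Set Ω) (hA : MeasurableSet A) :
    Integrable (A.indicator fun _ => (1 : ℝ)) μ :=
  (integrable_const 1).indicator hA

lemma condexp_indicator_norm_le_one' (m : MeasurableSpace Ω) {mΩ : MeasurableSpace Ω}
    {μ : Measure Ω} [IsProbabilityMeasure μ] (hm : m ≤ mΩ) {A : Set Ω}
    (hA : MeasurableSet[mΩ] A) :
    ∀ᵐ ω ∂μ, ‖(μ⟦A | m⟧) ω‖ ≤ 1 := by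
  have h0 : 0 ≤ᵐ[μ] μ⟦A | m⟧ :=
    condExp_nonneg (Filter.Eventually.of_forall fun ω =>
      Set.indicator_nonneg (fun _ _ => zero_le_one) ω)
  have h1 : μ⟦A | m⟧ ≤ᵐ[μ] μ[(fun _ => (1 : ℝ)) | m] :=
    condExp_mono (indicator_int' A hA) (integrable_const 1)
      (Filter.Eventually.of_forall fun ω =>
        Set.indicator_apply_le' (fun _ => le_rfl) (fun _ => zero_le_one))
  rw [condExp_const hm] at h1
  filter_upwards [h0, h1] with ω h0 h1
  simp only [Pi.zero_apply] at h0
  rw [Real.norm_eq_abs, abs_le]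
  exact ⟨by linarith, h1⟩

lemma sup_eq_generateFrom_inter' (m n : MeasurableSpace Ω) :
    m ⊔ n = MeasurableSpace.generateFrom
      {s | ∃ s1 s2, MeasurableSet[m] s1 ∧ MeasurableSet[n] s2 ∧ s = s1 ∩ s2} := by
  refine le_antisymm (sup_le ?_ ?_) (MeasurableSpace.generateFrom_le ?_)
  · intro s hs
    exact MeasurableSpace.measurableSet_generateFrom
      ⟨s, Set.univ, hs, MeasurableSet.univ, (Set.inter_univ s).symm⟩
  · intro s hs
    exact MeasurableSpace.measurableSet_generateFrom
      ⟨Set.univ, s, MeasurableSet.univ, hs, (Set.univ_inter s).symm⟩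
  · rintro s ⟨s1, s2, h1, h2, rfl⟩
    exact ((le_sup_left : m ≤ m ⊔ n) _ h1).inter ((le_sup_right : n ≤ m ⊔ n) _ h2)

lemma isPiSystem_inter_sets' (m n : MeasurableSpace Ω) :
    IsPiSystem {s | ∃ s1 s2, MeasurableSet[m] s1 ∧ MeasurableSet[n] s2 ∧ s = s1 ∩ s2} := by
  rintro s ⟨a, b, ha, hb, rfl⟩ t ⟨c, d, hc, hd, rfl⟩ -
  exact ⟨a ∩ c, b ∩ d, ha.inter hc, hb.inter hd, by rw [Set.inter_inter_inter_comm]⟩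

lemma condIndep_iff_condexp_sup (m' m₁ m₂ : MeasurableSpace Ω)
    {mΩ : MeasurableSpace Ω} [StandardBorelSpace Ω] {μ : Measure Ω} [IsProbabilityMeasure μ]
    (hm' : m' ≤ mΩ) (hm₁ : m₁ ≤ mΩ) (hm₂ : m₂ ≤ mΩ) :
    CondIndep m' m₁ m₂ hm' μ ↔
      ∀ A, MeasurableSet[m₁] A → (μ⟦A | m' ⊔ m₂⟧) =ᵐ[μ] μ⟦A | m'⟧ := by
  have hsup : m' ⊔ m₂ ≤ mΩ := sup_le hm' hm₂
  rw [condIndep_iff m' m₁ m₂ hm' hm₁ hm₂ μ]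
  constructor
  · intro h A hA
    have hAΩ : MeasurableSet A := hm₁ _ hA
    have key : ∀ ⦃s : Set Ω⦄, MeasurableSet[m' ⊔ m₂] s →
        ∫ x in s, (μ⟦A | m'⟧) x ∂μ = ∫ x in s, A.indicator (fun _ => (1:ℝ)) x ∂μ := by
      refine MeasurableSpace.induction_on_inter (m := m' ⊔ m₂)
        (C := fun s _ => ∫ x in s, (μ⟦A | m'⟧) x ∂μ
          = ∫ x in s, A.indicator (fun _ => (1:ℝ)) x ∂μ)
        (sup_eq_generateFrom_inter' m' m₂) (isPiSystem_inter_sets' m' m₂) (by simp)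
        ?_ ?_ ?_
      · -- basic case
        rintro s ⟨s1, s2, hs1, hs2, rfl⟩
        have hs1Ω : MeasurableSet s1 := hm' _ hs1
        have hs2Ω : MeasurableSet s2 := hm₂ _ hs2
        have hprod := h A s2 hA hs2
        have hintW : Integrable (s2.indicator fun _ => (1:ℝ)) μ := indicator_int' _ hs2Ω
        have hgmul : Integrable (μ⟦A | m'⟧ * s2.indicator fun _ => (1:ℝ)) μ :=
          Integrable.bdd_mul hintW (stronglyMeasurable_condExp.mono hm').aestronglyMeasurable
            (condexp_indicator_norm_le_one' m' hm' hAΩ)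
        have hfun : s2.indicator (μ⟦A | m'⟧)
            = μ⟦A | m'⟧ * s2.indicator (fun _ => (1:ℝ)) := by
          funext x; by_cases hx : x ∈ s2 <;> simp [Set.indicator_apply, hx]
        have hL : ∫ x in s1 ∩ s2, (μ⟦A | m'⟧) x ∂μ
            = ∫ x in s1, (μ⟦A | m'⟧ * μ⟦s2 | m'⟧) x ∂μ := by
          rw [← setIntegral_indicator hs2Ω, hfun,
            ← setIntegral_condExp hm' hgmul hs1]
          refine setIntegral_congr_ae hs1Ω ?_
          filter_upwards [condExp_mul_of_stronglyMeasurable_left stronglyMeasurable_condExp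
            hgmul hintW] with x hx _
          exact hx
        have hR : ∫ x in s1 ∩ s2, A.indicator (fun _ => (1:ℝ)) x ∂μ
            = ∫ x in s1, (μ⟦A | m'⟧ * μ⟦s2 | m'⟧) x ∂μ := by
          rw [← setIntegral_indicator hs2Ω,
            show s2.indicator (A.indicator fun _ => (1:ℝ))
              = (A ∩ s2).indicator (fun _ => (1:ℝ)) by
                rw [Set.indicator_indicator, Set.inter_comm],
            ← setIntegral_condExp hm' (indicator_int' _ (hAΩ.inter hs2Ω)) hs1]
          refine setIntegral_congr_ae hs1Ω ?_
          filter_upwards [hprod] with x hx _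
          exact hx
        exact hL.trans hR.symm
      · -- complement
        intro s hs hC
        have hsΩ : MeasurableSet s := hsup _ hs
        have h1 := integral_add_compl hsΩ
          (integrable_condExp (m := m') (f := A.indicator fun _ => (1:ℝ)) (μ := μ))
        have h2 := integral_add_compl hsΩ (indicator_int' A hAΩ (μ := μ))
        have h3 : ∫ x, (μ⟦A | m'⟧) x ∂μ = ∫ x, A.indicator (fun _ => (1:ℝ)) x ∂μ :=
          integral_condExp hm'
        linarith
      · -- disjoint union
        intro g hdisj hmeas hC
        rw [integral_iUnion (fun i => hsup _ (hmeas i)) hdisj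
            integrable_condExp.integrableOn,
          integral_iUnion (fun i => hsup _ (hmeas i)) hdisj
            (indicator_int' A hAΩ).integrableOn]
        exact tsum_congr hC
    exact (ae_eq_condExp_of_forall_setIntegral_eq hsup (indicator_int' A hAΩ)
      (fun s _ _ => integrable_condExp.integrableOn)
      (fun s hs _ => key hs)
      (StronglyMeasurable.aestronglyMeasurable
        (stronglyMeasurable_condExp.mono le_sup_left))).symm
  · intro h t1 t2 ht1 ht2
    have ht1Ω : MeasurableSet t1 := hm₁ _ ht1
    have ht2Ω : MeasurableSet t2 := hm₂ _ ht2
    have ht2sup : MeasurableSet[m' ⊔ m₂] t2 := (le_sup_right : m₂ ≤ m' ⊔ m₂) _ ht2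
    have heq : (t1 ∩ t2).indicator (fun _ => (1:ℝ))
        = t2.indicator (fun _ => (1:ℝ)) * t1.indicator (fun _ => (1:ℝ)) := by
      funext x; by_cases h1 : x ∈ t1 <;> by_cases h2 : x ∈ t2 <;>
        simp [Set.indicator_apply, h1, h2]
    have hint12 : Integrable (t2.indicator (fun _ => (1:ℝ))
        * t1.indicator (fun _ => (1:ℝ))) μ :=
      heq ▸ indicator_int' _ (ht1Ω.inter ht2Ω)
    have a1 : μ⟦t1 ∩ t2 | m'⟧ =ᵐ[μ] μ[μ⟦t1 ∩ t2 | m' ⊔ m₂⟧ | m'] :=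
      (condExp_condExp_of_le le_sup_left hsup).symm
    have a2 : μ⟦t1 ∩ t2 | m' ⊔ m₂⟧
        =ᵐ[μ] t2.indicator (fun _ => (1:ℝ)) * μ⟦t1 | m' ⊔ m₂⟧ := by
      rw [show (t1 ∩ t2).indicator (fun ω => (1:ℝ)) = _ from heq]
      exact condExp_mul_of_stronglyMeasurable_left
        (stronglyMeasurable_const.indicator ht2sup) hint12 (indicator_int' _ ht1Ω)
    have a3 : t2.indicator (fun _ => (1:ℝ)) * μ⟦t1 | m' ⊔ m₂⟧
        =ᵐ[μ] μ⟦t1 | m'⟧ * t2.indicator (fun _ => (1:ℝ)) := by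
      filter_upwards [h t1 ht1] with ω hω
      simp only [Pi.mul_apply]
      rw [hω, mul_comm]
    have hintg : Integrable (μ⟦t1 | m'⟧ * t2.indicator (fun _ => (1:ℝ))) μ :=
      Integrable.bdd_mul (indicator_int' _ ht2Ω)
        (stronglyMeasurable_condExp.mono hm').aestronglyMeasurable
        (condexp_indicator_norm_le_one' m' hm' ht1Ω)
    have a4 : μ[μ⟦t1 | m'⟧ * t2.indicator (fun _ => (1:ℝ)) | m'] =ᵐ[μ]
        μ⟦t1 | m'⟧ * μ⟦t2 | m'⟧ :=
      condExp_mul_of_stronglyMeasurable_left stronglyMeasurable_condExp hintg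
        (indicator_int' _ ht2Ω)
    exact a1.trans ((condExp_congr_ae (a2.trans a3)).trans a4)

end Aux2

section Aux2

variable {Ω : Type*}

lemma condIndep_weak_union (m' m₁ m₂ m₃ : MeasurableSpace Ω)
    {mΩ : MeasurableSpace Ω} [StandardBorelSpace Ω] {μ : Measure Ω} [IsProbabilityMeasure μ]
    (hm' : m' ≤ mΩ) (hm₁ : m₁ ≤ mΩ) (hm₂ : m₂ ≤ mΩ) (h₃₂ : m₃ ≤ m₂)
    (h : CondIndep m' m₁ m₂ hm' μ) {h' : m' ⊔ m₃ ≤ mΩ} :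
    CondIndep (m' ⊔ m₃) m₁ m₂ h' μ := by
  rw [condIndep_iff_condexp_sup _ _ _ hm' hm₁ hm₂] at h
  rw [condIndep_iff_condexp_sup _ _ _ h' hm₁ hm₂]
  intro A hA
  have hkey := h A hA
  have e : m' ⊔ m₃ ⊔ m₂ = m' ⊔ m₂ := by rw [sup_assoc, sup_eq_right.mpr h₃₂]
  have tower : μ⟦A | m' ⊔ m₃⟧ =ᵐ[μ] μ⟦A | m'⟧ := by
    have t1 : μ[μ⟦A | m' ⊔ m₂⟧ | m' ⊔ m₃] =ᵐ[μ] μ⟦A | m' ⊔ m₃⟧ :=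
      condExp_condExp_of_le (sup_le_sup_left h₃₂ m') (sup_le hm' hm₂)
    have t2 : μ[μ⟦A | m' ⊔ m₂⟧ | m' ⊔ m₃] =ᵐ[μ] μ[μ⟦A | m'⟧ | m' ⊔ m₃] :=
      condExp_congr_ae hkey
    have t3 : μ[μ⟦A | m'⟧ | m' ⊔ m₃] = μ⟦A | m'⟧ :=
      condExp_of_stronglyMeasurable h'
        (stronglyMeasurable_condExp.mono le_sup_left) integrable_condExp
    exact t1.symm.trans (t3 ▸ t2)
  rw [e]
  exact hkey.trans tower.symm

lemma condIndep_enlarge_right (m' m₁ m₂ : MeasurableSpace Ω)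
    {mΩ : MeasurableSpace Ω} [StandardBorelSpace Ω] {μ : Measure Ω} [IsProbabilityMeasure μ]
    (hm' : m' ≤ mΩ) (hm₁ : m₁ ≤ mΩ) (hm₂ : m₂ ≤ mΩ)
    (h : CondIndep m' m₁ m₂ hm' μ) :
    CondIndep m' m₁ (m₂ ⊔ m') hm' μ := by
  rw [condIndep_iff_condexp_sup _ _ _ hm' hm₁ hm₂] at h
  rw [condIndep_iff_condexp_sup _ _ _ hm' hm₁ (sup_le hm₂ hm')]
  intro A hA
  have e : m' ⊔ (m₂ ⊔ m') = m' ⊔ m₂ := by rw [sup_comm m₂ m', ← sup_assoc, sup_idem]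
  rw [e]
  exact h A hA

lemma condIndep_contraction (m' m₁ m₂ m₃ : MeasurableSpace Ω)
    {mΩ : MeasurableSpace Ω} [StandardBorelSpace Ω] {μ : Measure Ω} [IsProbabilityMeasure μ]
    (hm' : m' ≤ mΩ) (hm₁ : m₁ ≤ mΩ) (hm₂ : m₂ ≤ mΩ) (hm₃ : m₃ ≤ mΩ)
    (h12 : CondIndep m' m₁ m₂ hm' μ)
    (h13 : CondIndep (m' ⊔ m₂) m₁ m₃ (sup_le hm' hm₂) μ) :
    CondIndep m' m₁ (m₂ ⊔ m₃) hm' μ := by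
  rw [condIndep_iff_condexp_sup _ _ _ hm' hm₁ hm₂] at h12
  rw [condIndep_iff_condexp_sup _ _ _ (sup_le hm' hm₂) hm₁ hm₃] at h13
  rw [condIndep_iff_condexp_sup _ _ _ hm' hm₁ (sup_le hm₂ hm₃)]
  intro A hA
  have e : m' ⊔ (m₂ ⊔ m₃) = (m' ⊔ m₂) ⊔ m₃ := (sup_assoc m' m₂ m₃).symm
  rw [e]
  exact (h13 A hA).trans (h12 A hA)

lemma condexp_indicator_inter_of_indep (mH mX mW : MeasurableSpace Ω)
    {mΩ : MeasurableSpace Ω} {μ : Measure Ω} [IsProbabilityMeasure μ]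
    (hmH : mH ≤ mΩ) (hmX : mX ≤ mΩ) (hWX : mW ≤ mX)
    (hind : Indep mH mX μ) {H W : Set Ω}
    (hH : MeasurableSet[mH] H) (hW : MeasurableSet[mX] W) :
    (μ⟦H ∩ W | mW⟧) =ᵐ[μ] fun ω => (μ H).toReal * (μ⟦W | mW⟧) ω := by
  have hmW : mW ≤ mΩ := hWX.trans hmX
  have hWΩ : MeasurableSet[mΩ] W := hmX _ hW
  have hHΩ : MeasurableSet[mΩ] H := hmH _ hH
  refine (ae_eq_condExp_of_forall_setIntegral_eq hmW
    (indicator_int' _ (hHΩ.inter hWΩ))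
    (fun s _ _ => (integrable_condExp.const_mul _).integrableOn)
    (fun s hs _ => ?_)
    (StronglyMeasurable.aestronglyMeasurable
      (stronglyMeasurable_condExp.const_mul _))).symm
  have hsX : MeasurableSet[mX] s := hWX _ hs
  have hsΩ : MeasurableSet[mΩ] s := hmX _ hsX
  have e1 : ∫ x in s, (μ H).toReal * (μ⟦W | mW⟧) x ∂μ
      = (μ H).toReal * ∫ x in s, (μ⟦W | mW⟧) x ∂μ := integral_const_mul _ _
  rw [e1, setIntegral_condExp hmW (indicator_int' _ hWΩ) hs]
  have e2 : ∫ x in s, W.indicator (fun _ => (1:ℝ)) x ∂μ = (μ (W ∩ s)).toReal := by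
    rw [setIntegral_indicator hWΩ]
    simp [Set.inter_comm s W, Measure.real]
  have e3 : ∫ x in s, (H ∩ W).indicator (fun _ => (1:ℝ)) x ∂μ
      = (μ (H ∩ (W ∩ s))).toReal := by
    rw [setIntegral_indicator (hHΩ.inter hWΩ)]
    have : s ∩ (H ∩ W) = H ∩ (W ∩ s) := by ext x; simp only [Set.mem_inter_iff]; tauto
    simp [this, Measure.real]
  rw [e2, e3, (Indep_iff mH mX μ).mp hind H (W ∩ s) hH (hW.inter hsX),
    ENNReal.toReal_mul]

lemma condIndep_sup_of_indep (mW mA mB mH1 mH2 mX : MeasurableSpace Ω)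
    {mΩ : MeasurableSpace Ω} [StandardBorelSpace Ω] {μ : Measure Ω} [IsProbabilityMeasure μ]
    (hmX : mX ≤ mΩ) (hmH1 : mH1 ≤ mΩ) (hmH2 : mH2 ≤ mΩ)
    (hWX : mW ≤ mX) (hAX : mA ≤ mX) (hBX : mB ≤ mX)
    (hH12 : Indep mH1 mH2 μ) (hHX : Indep (mH1 ⊔ mH2) mX μ)
    (hW : mW ≤ mΩ)
    (h : CondIndep mW mA mB hW μ) :
    CondIndep mW (mA ⊔ mH1) (mB ⊔ mH2) hW μ := by
  have hmA : mA ≤ mΩ := hAX.trans hmX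
  have hmB : mB ≤ mΩ := hBX.trans hmX
  have hprod := (condIndep_iff mW mA mB hW hmA hmB μ).mp h
  rw [sup_eq_generateFrom_inter' mA mH1, sup_eq_generateFrom_inter' mB mH2]
  refine CondIndepSets.condIndep'
    (fun s hs => ?_) (fun s hs => ?_)
    (isPiSystem_inter_sets' mA mH1) (isPiSystem_inter_sets' mB mH2) ?_
  · obtain ⟨a, b, ha, hb, rfl⟩ := hs
    exact (hmA _ ha).inter (hmH1 _ hb)
  · obtain ⟨a, b, ha, hb, rfl⟩ := hs
    exact (hmB _ ha).inter (hmH2 _ hb)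
  rw [condIndepSets_iff mW hW _ _ ?_ ?_ μ]
  rotate_left
  · rintro s ⟨a, b, ha, hb, rfl⟩
    exact (hmA _ ha).inter (hmH1 _ hb)
  · rintro s ⟨a, b, ha, hb, rfl⟩
    exact (hmB _ ha).inter (hmH2 _ hb)
  rintro _ _ ⟨a, h1, ha, hh1, rfl⟩ ⟨b, h2, hb, hh2, rfl⟩
  have hset : (a ∩ h1) ∩ (b ∩ h2) = (h1 ∩ h2) ∩ (a ∩ b) := by
    ext x; simp only [Set.mem_inter_iff]; tauto
  have hset1 : a ∩ h1 = h1 ∩ a := Set.inter_comm _ _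
  have hset2 : b ∩ h2 = h2 ∩ b := Set.inter_comm _ _
  have l1 := condexp_indicator_inter_of_indep (mH1 ⊔ mH2) mX mW
    (sup_le hmH1 hmH2) hmX hWX hHX
    (((le_sup_left : mH1 ≤ mH1 ⊔ mH2) _ hh1).inter
      ((le_sup_right : mH2 ≤ mH1 ⊔ mH2) _ hh2))
    ((hAX _ ha).inter (hBX _ hb))
  have l2 := hprod a b ha hb
  have r1 := condexp_indicator_inter_of_indep (mH1 ⊔ mH2) mX mW
    (sup_le hmH1 hmH2) hmX hWX hHX
    ((le_sup_left : mH1 ≤ mH1 ⊔ mH2) _ hh1) (hAX _ ha)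
  have r2 := condexp_indicator_inter_of_indep (mH1 ⊔ mH2) mX mW
    (sup_le hmH1 hmH2) hmX hWX hHX
    ((le_sup_right : mH2 ≤ mH1 ⊔ mH2) _ hh2) (hBX _ hb)
  have hμ12 : μ (h1 ∩ h2) = μ h1 * μ h2 :=
    (Indep_iff mH1 mH2 μ).mp hH12 h1 h2 hh1 hh2
  rw [hset, hset1, hset2]
  filter_upwards [l1, l2, r1, r2] with ω e1 e2 e3 e4
  simp only [Pi.mul_apply] at e2 ⊢
  rw [e1, e2, e3, e4, hμ12, ENNReal.toReal_mul]
  ring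

end Aux2
/-- Sup of comap σ-algebras over naturals satisfying a predicate. -/
abbrev mSup {Ω β : Type*} [mβ : MeasurableSpace β] (g : ℕ → Ω → β) (p : ℕ → Prop) :
    MeasurableSpace Ω :=
  ⨆ (j : ℕ) (_ : p j), MeasurableSpace.comap (g j) mβ

/-- Sup of comap σ-algebras over a set of `Fin n` indices. -/
abbrev mSupF {Ω β : Type*} [mβ : MeasurableSpace β] {n : ℕ} (g : ℕ → Ω → β)
    (S : Set (Fin n)) : MeasurableSpace Ω :=
  ⨆ i ∈ S, MeasurableSpace.comap (g ↑i) mβ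

/-- Sup of comap σ-algebras over all `Fin n` indices. -/
abbrev mAll {Ω β : Type*} [mβ : MeasurableSpace β] (n : ℕ) (g : ℕ → Ω → β) :
    MeasurableSpace Ω :=
  ⨆ i : Fin n, MeasurableSpace.comap (g ↑i) mβ
lemma condIndep_congr_cond {Ω : Type*} (m₁ m₂ ma mb : MeasurableSpace Ω)
    {mΩ : MeasurableSpace Ω} [StandardBorelSpace Ω] {μ : Measure Ω} [IsProbabilityMeasure μ]
    (e : ma = mb) (ha : ma ≤ mΩ) {hb : mb ≤ mΩ}
    (h : CondIndep ma m₁ m₂ ha μ) : CondIndep mb m₁ m₂ hb μ := by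
  subst e; exact h
lemma comap_tuple {Ω ι β : Type*} [mβ : MeasurableSpace β] (g : ι → Ω → β) :
    MeasurableSpace.comap (fun ω (i : ι) => g i ω) MeasurableSpace.pi
      = ⨆ i, MeasurableSpace.comap (g i) mβ := by
  have h : (MeasurableSpace.pi : MeasurableSpace (ι → β))
      = ⨆ i, mβ.comap fun b => b i := rfl
  rw [h, MeasurableSpace.comap_iSup]
  exact iSup_congr fun i => by rw [MeasurableSpace.comap_comp]; rfl

lemma measurable_pi_lambda' {Ω' δ 𝓨' : Type*} (m : MeasurableSpace Ω') [MeasurableSpace 𝓨']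
    (f : Ω' → δ → 𝓨') (hf : ∀ a, @Measurable Ω' 𝓨' m _ fun c => f c a) :
    @Measurable Ω' (δ → 𝓨') m _ f :=
  measurable_pi_lambda f hf

/-- **Proposition 2 (trace-level privacy).**
Let `X_0, …, X_T` be an inhomogeneous Markov chain with values in `Fin K`, let `P ⊆ ℕ` be the set
of private times with `0 ∈ P`, and let `τ t = max {i ∈ P : i ≤ t}`. Let `F_0, …, F_T` be fresh
random keys, mutually independent and independent of `(X_0, …, X_T)`, and let the queries be
defined recursively by `Y_t = f_t (X_{τ t}, X_t, (Y_0, …, Y_{t−1}), F_t)`.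
If for every `t ∈ {0, …, T}` the query `Y_t` is conditionally independent of `X_{τ t}` given the
past queries `(Y_0, …, Y_{t−1})`, then for every `t ∈ {0, …, T}` the query `Y_t` is conditionally
independent of the whole private trace `(X_j)_{j ∈ P ∩ {0,…,t}}` given `(Y_0, …, Y_{t−1})`. -/
theorem trace_level_privacy
    {Ω 𝓚 𝓨 : Type*}
    [MeasurableSpace Ω] [StandardBorelSpace Ω] [Nonempty Ω]
    [MeasurableSpace 𝓚] [MeasurableSpace 𝓨]
    (μ : Measure Ω) [IsProbabilityMeasure μ]
    (T : ℕ) (hT : 0 < T) (K : ℕ)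
    (X : ℕ → Ω → Fin K) (hX : ∀ t, Measurable (X t))
    (hMarkov : ∀ t : ℕ, 1 ≤ t → t ≤ T - 1 →
      CondIndepFun (MeasurableSpace.comap (X t) inferInstance) (hX t).comap_le
        (fun ω => fun j : Fin t => X j ω) (X (t + 1)) μ)
    (P : Set ℕ) (h0 : 0 ∈ P)
    (τ : ℕ → ℕ)
    (hτ : ∀ t : ℕ, τ t ∈ P ∧ τ t ≤ t ∧ ∀ i ∈ P, i ≤ t → i ≤ τ t)
    (F : ℕ → Ω → 𝓚) (hF : ∀ t, Measurable (F t))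
    (hFiIndep : iIndepFun
      (fun t : Fin (T + 1) => F t) μ)
    (hFXIndep : IndepFun (fun ω => fun t : Fin (T + 1) => F t ω)
      (fun ω => fun t : Fin (T + 1) => X t ω) μ)
    (Y : ℕ → Ω → 𝓨) (hY : ∀ t, Measurable (Y t))
    (f : (t : ℕ) → Fin K × Fin K × (Fin t → 𝓨) × 𝓚 → 𝓨)
    (hf : ∀ t, Measurable (f t))
    (hrec : ∀ t : ℕ, t ≤ T → ∀ ω,
      Y t ω = f t (X (τ t) ω, X t ω, fun j : Fin t => Y j ω, F t ω))
    (hstep : ∀ t : ℕ, t ≤ T →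
      CondIndepFun (MeasurableSpace.comap (fun ω => fun j : Fin t => Y j ω) inferInstance)
        (measurable_pi_lambda _ fun j : Fin t => hY j).comap_le
        (Y t) (X (τ t)) μ) :
    ∀ t : ℕ, t ≤ T →
      CondIndepFun (MeasurableSpace.comap (fun ω => fun j : Fin t => Y j ω) inferInstance)
        (measurable_pi_lambda _ fun j : Fin t => hY j).comap_le
        (Y t) (fun ω => fun j : {j : ℕ // j ∈ P ∧ j ≤ t} => X j ω) μ := by
  intro t ht
  obtain ⟨hτP, hτle, hτmax⟩ := hτ t
  -- ambient bounds
  have hmWΩ : MeasurableSpace.comap (X (τ t)) inferInstance ≤ ‹MeasurableSpace Ω› :=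
    (hX _).comap_le
  have hmPΩ : mSup X (fun j => j < τ t) ≤ ‹MeasurableSpace Ω› :=
    iSup₂_le fun j _ => (hX j).comap_le
  have hmBΩ : ∀ u, mSup X (fun j => τ t < j ∧ j ≤ u) ≤ ‹MeasurableSpace Ω› :=
    fun u => iSup₂_le fun j _ => (hX j).comap_le
  have hmH1Ω : mSupF (n := T + 1) F {i | (i : ℕ) < τ t} ≤ ‹MeasurableSpace Ω› :=
    iSup₂_le fun i _ => (hF _).comap_le
  have hmH2Ω : mSupF (n := T + 1) F {i | τ t ≤ (i : ℕ) ∧ (i : ℕ) ≤ t} ≤ ‹MeasurableSpace Ω› :=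
    iSup₂_le fun i _ => (hF _).comap_le
  have hmQΩ : mSup Y (fun s => s < τ t) ≤ ‹MeasurableSpace Ω› :=
    iSup₂_le fun s _ => (hY s).comap_le
  have hmRΩ : mSup Y (fun s => τ t ≤ s ∧ s < t) ≤ ‹MeasurableSpace Ω› :=
    iSup₂_le fun s _ => (hY s).comap_le
  have hmXgΩ : mAll (T + 1) X ≤ ‹MeasurableSpace Ω› := iSup_le fun i => (hX _).comap_le
  have hWX : MeasurableSpace.comap (X (τ t)) inferInstance ≤ mAll (T + 1) X :=
    le_iSup (fun i : Fin (T + 1) => MeasurableSpace.comap (X (i : ℕ)) inferInstance)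
      (⟨τ t, by omega⟩ : Fin (T + 1))
  have hPX : mSup X (fun j => j < τ t) ≤ mAll (T + 1) X := iSup₂_le fun j hj =>
    le_iSup (fun i : Fin (T + 1) => MeasurableSpace.comap (X (i : ℕ)) inferInstance)
      (⟨j, by omega⟩ : Fin (T + 1))
  have hBX : mSup X (fun j => τ t < j ∧ j ≤ t) ≤ mAll (T + 1) X := iSup₂_le fun j hj =>
    le_iSup (fun i : Fin (T + 1) => MeasurableSpace.comap (X (i : ℕ)) inferInstance)
      (⟨j, by omega⟩ : Fin (T + 1))
  -- independence of the keys among themselves and from the chain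
  have hH12 : Indep (mSupF (n := T + 1) F {i | (i : ℕ) < τ t})
      (mSupF (n := T + 1) F {i | τ t ≤ (i : ℕ) ∧ (i : ℕ) ≤ t}) μ := by
    refine indep_iSup_of_disjoint (fun i => (hF _).comap_le)
      ((iIndepFun_iff_iIndep _ _ _).mp hFiIndep) ?_
    refine Set.disjoint_left.mpr fun i hi hi' => ?_
    exact absurd hi' (by simp only [Set.mem_setOf_eq] at hi ⊢; omega)
  have hFX : Indep ((mSupF (n := T + 1) F {i | (i : ℕ) < τ t}) ⊔
      (mSupF (n := T + 1) F {i | τ t ≤ (i : ℕ) ∧ (i : ℕ) ≤ t})) (mAll (T + 1) X) μ := by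
    have h1 : Indep
        (MeasurableSpace.comap (fun ω => fun i : Fin (T + 1) => F i ω) MeasurableSpace.pi)
        (MeasurableSpace.comap (fun ω => fun i : Fin (T + 1) => X i ω) MeasurableSpace.pi)
        μ := hFXIndep
    rw [comap_tuple, comap_tuple] at h1
    exact indep_of_indep_of_le_left h1
      (sup_le (iSup₂_le fun i _ => le_iSup (fun i : Fin (T + 1) => MeasurableSpace.comap (F (i : ℕ)) inferInstance) i) (iSup₂_le fun i _ => le_iSup (fun i : Fin (T + 1) => MeasurableSpace.comap (F (i : ℕ)) inferInstance) i))
  -- the Markov-chain block independence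
  have hM1 : CondIndep (MeasurableSpace.comap (X (τ t)) inferInstance)
      (mSup X (fun j => j < τ t)) (mSup X (fun j => τ t < j ∧ j ≤ t)) hmWΩ μ := by
    rcases Nat.eq_zero_or_pos (τ t) with hτ0 | hτpos
    · have hbot : mSup X (fun j => j < τ t) = ⊥ :=
        le_bot_iff.mp (iSup₂_le fun j hj => absurd hj (by omega))
      rw [hbot]; exact condIndep_bot_left _
    · have key : ∀ u, τ t ≤ u → u ≤ t →
          CondIndep (MeasurableSpace.comap (X (τ t)) inferInstance)
            (mSup X (fun j => j < τ t)) (mSup X (fun j => τ t < j ∧ j ≤ u)) hmWΩ μ := by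
        intro u hu1
        induction u, hu1 using Nat.le_induction with
        | base =>
          intro _
          have hbot : mSup X (fun j => τ t < j ∧ j ≤ τ t) = ⊥ :=
            le_bot_iff.mp (iSup₂_le fun j hj => absurd hj (by omega))
          rw [hbot]; exact condIndep_bot_right _
        | succ u hu IH =>
          intro hu2
          have IH' := IH (by omega)
          have hMk := (condIndepFun_iff_condIndep _ ((hX u).comap_le) _ _ μ).mp
            (hMarkov u (by omega) (by omega))
          rw [comap_tuple (fun j : Fin u => X j)] at hMk
          -- hMk : CondIndep (comap (X u)) (⨆ j : Fin u, comap (X j)) (comap (X (u+1)))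
          have hMnΩ : (⨆ j : Fin u, MeasurableSpace.comap (X (j : ℕ)) inferInstance)
              ≤ ‹MeasurableSpace Ω› := iSup_le fun j => (hX _).comap_le
          have hm1 := (condIndep_enlarge_right _ _ _ ((hX u).comap_le) ((hX (u + 1)).comap_le)
            hMnΩ hMk.symm).symm
          -- hm1 : CondIndep (comap (X u)) (Mn ⊔ comap (X u)) (comap (X (u+1)))
          have hsub : (MeasurableSpace.comap (X (τ t)) inferInstance
                ⊔ mSup X (fun j => τ t < j ∧ j ≤ u))
              ≤ (⨆ j : Fin u, MeasurableSpace.comap (X (j : ℕ)) inferInstance)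
                ⊔ MeasurableSpace.comap (X u) inferInstance := by
            refine sup_le ?_ (iSup₂_le fun j hj => ?_)
            · rcases eq_or_lt_of_le hu with he | hlt
              · exact he ▸ le_sup_right
              · exact le_trans (le_iSup (fun j : Fin u =>
                  MeasurableSpace.comap (X (j : ℕ)) inferInstance) ⟨τ t, hlt⟩) le_sup_left
            · rcases eq_or_lt_of_le hj.2 with he | hlt
              · exact he ▸ le_sup_right
              · exact le_trans (le_iSup (fun j : Fin u =>
                  MeasurableSpace.comap (X (j : ℕ)) inferInstance) ⟨j, hlt⟩) le_sup_left
          have hm2 := (condIndep_weak_union _ _ _ _ ((hX u).comap_le) ((hX (u + 1)).comap_le)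
            (sup_le hMnΩ ((hX u).comap_le)) hsub hm1.symm
            (h' := sup_le ((hX u).comap_le) (sup_le hmWΩ (hmBΩ u)))).symm
          have hcondeq : MeasurableSpace.comap (X u) inferInstance
              ⊔ (MeasurableSpace.comap (X (τ t)) inferInstance
                ⊔ mSup X (fun j => τ t < j ∧ j ≤ u))
              = MeasurableSpace.comap (X (τ t)) inferInstance
                ⊔ mSup X (fun j => τ t < j ∧ j ≤ u) := by
            refine sup_eq_right.mpr ?_
            rcases eq_or_lt_of_le hu with he | hlt
            · exact he ▸ le_sup_left
            · exact le_trans (le_iSup₂ (f := fun (j : ℕ) (_ : τ t < j ∧ j ≤ u) =>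
                MeasurableSpace.comap (X j) inferInstance) u ⟨hlt, le_refl u⟩) le_sup_right
          have hm3 := condIndep_congr_cond _ _ _ _ hcondeq
            (sup_le ((hX u).comap_le) (sup_le hmWΩ (hmBΩ u))) hm2
            (hb := sup_le hmWΩ (hmBΩ u))
          have hm4 := condIndep_of_condIndep_of_le_left hm3
            (iSup₂_le fun j hj => le_trans (le_iSup (fun j : Fin u =>
              MeasurableSpace.comap (X (j : ℕ)) inferInstance) ⟨j, lt_of_lt_of_le hj hu⟩)
              le_sup_left)
          -- hm4 : CondIndep (mW ⊔ mB u) mP (comap (X (u+1)))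
          have hm5 := condIndep_contraction _ _ _ _ hmWΩ hmPΩ (hmBΩ u)
            ((hX (u + 1)).comap_le) IH' hm4
          exact condIndep_of_condIndep_of_le_right hm5 (iSup₂_le fun j hj => by
            rcases eq_or_lt_of_le hj.2 with he | hlt
            · exact he ▸ le_sup_right
            · exact le_trans (le_iSup₂ (f := fun (j : ℕ) (_ : τ t < j ∧ j ≤ u) =>
                MeasurableSpace.comap (X j) inferInstance) j ⟨hj.1, by omega⟩) le_sup_left)
      exact key t hτle le_rfl
  -- constancy of τ on [τ t, t]
  have tau_const : ∀ s, τ t ≤ s → s ≤ t → τ s = τ t := fun s h1 h2 =>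
    le_antisymm (hτmax (τ s) (hτ s).1 ((hτ s).2.1.trans h2)) ((hτ s).2.2 (τ t) hτP h1)
  -- measurability of early queries
  have meas1 : ∀ s, s < τ t → MeasurableSpace.comap (Y s) inferInstance
      ≤ mSup X (fun j => j < τ t) ⊔ mSupF (n := T + 1) F {i | (i : ℕ) < τ t} := by
    intro s
    induction s using Nat.strong_induction_on with
    | _ s IH =>
      intro hs
      have hY_eq : Y s = fun ω => f s (X (τ s) ω, X s ω, fun j : Fin s => Y j ω, F s ω) :=
        funext (hrec s (by omega))
      have hmeas : @Measurable Ω 𝓨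
          (mSup X (fun j => j < τ t) ⊔ mSupF (n := T + 1) F {i | (i : ℕ) < τ t}) _ (Y s) := by
        rw [hY_eq]
        refine (hf s).comp (Measurable.prodMk ?_ (Measurable.prodMk ?_
          (Measurable.prodMk ?_ ?_)))
        · exact measurable_iff_comap_le.mpr (le_trans (le_iSup₂ (f := fun (j : ℕ)
            (_ : j < τ t) => MeasurableSpace.comap (X j) inferInstance) (τ s)
            (lt_of_le_of_lt (hτ s).2.1 hs)) le_sup_left)
        · exact measurable_iff_comap_le.mpr (le_trans (le_iSup₂ (f := fun (j : ℕ)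
            (_ : j < τ t) => MeasurableSpace.comap (X j) inferInstance) s hs) le_sup_left)
        · exact measurable_pi_lambda' _ _ fun j =>
            measurable_iff_comap_le.mpr (IH (j : ℕ) j.2 (lt_trans j.2 hs))
        · exact measurable_iff_comap_le.mpr (le_trans (le_biSup (fun i : Fin (T + 1) =>
            MeasurableSpace.comap (F (i : ℕ)) inferInstance)
            (show (⟨s, by omega⟩ : Fin (T + 1)) ∈ {i : Fin (T + 1) | (i : ℕ) < τ t} from hs))
            le_sup_right)
      exact hmeas.comap_le
  -- measurability of late queries
  have meas2 : ∀ s, τ t ≤ s → s ≤ t → MeasurableSpace.comap (Y s) inferInstance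
      ≤ (mSup X (fun j => τ t < j ∧ j ≤ t)
          ⊔ mSupF (n := T + 1) F {i | τ t ≤ (i : ℕ) ∧ (i : ℕ) ≤ t})
        ⊔ (MeasurableSpace.comap (X (τ t)) inferInstance ⊔ mSup Y (fun s => s < τ t)) := by
    intro s
    induction s using Nat.strong_induction_on with
    | _ s IH =>
      intro hs1 hs2
      have hY_eq : Y s = fun ω => f s (X (τ s) ω, X s ω, fun j : Fin s => Y j ω, F s ω) :=
        funext (hrec s (by omega))
      have hτs : τ s = τ t := tau_const s hs1 hs2
      have hmeas : @Measurable Ω 𝓨 ((mSup X (fun j => τ t < j ∧ j ≤ t)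
          ⊔ mSupF (n := T + 1) F {i | τ t ≤ (i : ℕ) ∧ (i : ℕ) ≤ t})
          ⊔ (MeasurableSpace.comap (X (τ t)) inferInstance
            ⊔ mSup Y (fun s => s < τ t))) _ (Y s) := by
        rw [hY_eq, hτs]
        refine (hf s).comp (Measurable.prodMk ?_ (Measurable.prodMk ?_
          (Measurable.prodMk ?_ ?_)))
        · exact measurable_iff_comap_le.mpr (le_trans le_sup_left le_sup_right)
        · rcases eq_or_lt_of_le hs1 with he | hlt
          · exact measurable_iff_comap_le.mpr (he ▸ le_trans le_sup_left le_sup_right)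
          · exact measurable_iff_comap_le.mpr (le_trans (le_trans (le_iSup₂
              (f := fun (j : ℕ) (_ : τ t < j ∧ j ≤ t) =>
                MeasurableSpace.comap (X j) inferInstance) s ⟨hlt, hs2⟩) le_sup_left)
              le_sup_left)
        · refine measurable_pi_lambda' _ _ fun j => measurable_iff_comap_le.mpr ?_
          rcases lt_or_ge (j : ℕ) (τ t) with hj | hj
          · exact le_trans (le_trans (le_iSup₂ (f := fun (u : ℕ) (_ : u < τ t) =>
              MeasurableSpace.comap (Y u) inferInstance) (j : ℕ) hj) le_sup_right)
              le_sup_right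
          · exact IH (j : ℕ) j.2 hj (by omega)
        · exact measurable_iff_comap_le.mpr (le_trans (le_trans (le_biSup
            (fun i : Fin (T + 1) => MeasurableSpace.comap (F (i : ℕ)) inferInstance)
            (show (⟨s, by omega⟩ : Fin (T + 1)) ∈
              {i : Fin (T + 1) | τ t ≤ (i : ℕ) ∧ (i : ℕ) ≤ t} from ⟨hs1, hs2⟩))
            le_sup_right) le_sup_left)
      exact hmeas.comap_le
  -- decomposition of the past-queries σ-algebra
  have hGsplit : MeasurableSpace.comap (fun ω => fun j : Fin t => Y j ω) MeasurableSpace.pi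
      = mSup Y (fun s => s < τ t) ⊔ mSup Y (fun s => τ t ≤ s ∧ s < t) := by
    rw [comap_tuple (fun j : Fin t => Y j)]
    refine le_antisymm (iSup_le fun j => ?_)
      (sup_le (iSup₂_le fun s hs => ?_) (iSup₂_le fun s hs => ?_))
    · rcases lt_or_ge (j : ℕ) (τ t) with hj | hj
      · exact le_trans (le_iSup₂ (f := fun (s : ℕ) (_ : s < τ t) =>
          MeasurableSpace.comap (Y s) inferInstance) (j : ℕ) hj) le_sup_left
      · exact le_trans (le_iSup₂ (f := fun (s : ℕ) (_ : τ t ≤ s ∧ s < t) =>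
          MeasurableSpace.comap (Y s) inferInstance) (j : ℕ) ⟨hj, j.2⟩) le_sup_right
    · exact le_iSup (fun j : Fin t => MeasurableSpace.comap (Y (j : ℕ)) inferInstance)
        ⟨s, lt_of_lt_of_le hs hτle⟩
    · exact le_iSup (fun j : Fin t => MeasurableSpace.comap (Y (j : ℕ)) inferInstance)
        ⟨s, hs.2⟩
  have hGΩ : MeasurableSpace.comap (fun ω => fun j : Fin t => Y j ω) MeasurableSpace.pi
      ≤ ‹MeasurableSpace Ω› := by
    rw [hGsplit]; exact sup_le hmQΩ hmRΩ
  -- mixing in the keys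
  have hM := condIndep_sup_of_indep _ _ _ _ _ _ hmXgΩ hmH1Ω hmH2Ω hWX hPX hBX hH12 hFX hmWΩ hM1
  have hUΩ : mSup X (fun j => j < τ t) ⊔ mSupF (n := T + 1) F {i | (i : ℕ) < τ t}
      ≤ ‹MeasurableSpace Ω› := sup_le hmPΩ hmH1Ω
  have hVΩ : mSup X (fun j => τ t < j ∧ j ≤ t)
      ⊔ mSupF (n := T + 1) F {i | τ t ≤ (i : ℕ) ∧ (i : ℕ) ≤ t}
      ≤ ‹MeasurableSpace Ω› := sup_le (hmBΩ t) hmH2Ω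
  have hQU : mSup Y (fun s => s < τ t)
      ≤ mSup X (fun j => j < τ t) ⊔ mSupF (n := T + 1) F {i | (i : ℕ) < τ t} :=
    iSup₂_le fun s hs => meas1 s hs
  have c2 := condIndep_weak_union _ _ _ _ hmWΩ hVΩ hUΩ hQU hM.symm
    (h' := sup_le hmWΩ hmQΩ)
  have c3 := (condIndep_enlarge_right _ _ _ (sup_le hmWΩ hmQΩ) hUΩ hVΩ c2.symm).symm
  have hRle : mSup Y (fun s => τ t ≤ s ∧ s < t)
      ≤ (mSup X (fun j => τ t < j ∧ j ≤ t)
          ⊔ mSupF (n := T + 1) F {i | τ t ≤ (i : ℕ) ∧ (i : ℕ) ≤ t})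
        ⊔ (MeasurableSpace.comap (X (τ t)) inferInstance ⊔ mSup Y (fun s => s < τ t)) :=
    iSup₂_le fun s hs => meas2 s hs.1 (le_of_lt hs.2)
  have c4 := (condIndep_weak_union _ _ _ _ (sup_le hmWΩ hmQΩ) hUΩ
      (sup_le hVΩ (sup_le hmWΩ hmQΩ)) hRle c3.symm
      (h' := sup_le (sup_le hmWΩ hmQΩ) hmRΩ)).symm
  have hYt : MeasurableSpace.comap (Y t) inferInstance
      ≤ (mSup X (fun j => τ t < j ∧ j ≤ t)
          ⊔ mSupF (n := T + 1) F {i | τ t ≤ (i : ℕ) ∧ (i : ℕ) ≤ t})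
        ⊔ (MeasurableSpace.comap (X (τ t)) inferInstance ⊔ mSup Y (fun s => s < τ t)) :=
    meas2 t hτle le_rfl
  have c5 := condIndep_of_condIndep_of_le_right
    (condIndep_of_condIndep_of_le_left c4 hYt) le_sup_left
  have hGcond : (MeasurableSpace.comap (X (τ t)) inferInstance
        ⊔ mSup Y (fun s => s < τ t)) ⊔ mSup Y (fun s => τ t ≤ s ∧ s < t)
      = MeasurableSpace.comap (fun ω => fun j : Fin t => Y j ω) MeasurableSpace.pi
        ⊔ MeasurableSpace.comap (X (τ t)) inferInstance := by
    rw [sup_assoc, ← hGsplit, sup_comm]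
  have c6 := condIndep_congr_cond _ _ _ _ hGcond (sup_le (sup_le hmWΩ hmQΩ) hmRΩ) c5
    (hb := sup_le hGΩ hmWΩ)
  have hstep' := (condIndepFun_iff_condIndep _ hGΩ _ _ μ).mp (hstep t ht)
  have c7 := condIndep_contraction _ _ _ _ hGΩ ((hY t).comap_le) hmWΩ hmPΩ hstep' c6
  have htr : MeasurableSpace.comap (fun ω => fun j : {j : ℕ // j ∈ P ∧ j ≤ t} => X j ω)
      MeasurableSpace.pi ≤ MeasurableSpace.comap (X (τ t)) inferInstance
        ⊔ mSup X (fun j => j < τ t) := by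
    rw [comap_tuple (fun j : {j : ℕ // j ∈ P ∧ j ≤ t} => X j)]
    refine iSup_le fun j => ?_
    rcases lt_or_eq_of_le (hτmax (j : ℕ) j.2.1 j.2.2) with hlt | he
    · exact le_trans (le_iSup₂ (f := fun (i : ℕ) (_ : i < τ t) =>
        MeasurableSpace.comap (X i) inferInstance) (j : ℕ) hlt) le_sup_right
    · exact he ▸ le_sup_left
  have cfinal := condIndep_of_condIndep_of_le_right c7 htr
  rw [condIndepFun_iff_condIndep]
  exact cfinal
end
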